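/- arXiv:0810.3629 — 11 statements merged into one kernel-verified Lean document; each statement's English description precedes it below -/
import Mathlib

section
/- Let T be the bounded linear operator on ℓ²(ℕ, ℂ) determined on the standard orthonormal basis by T e_n = √(1 − q^{2(n+1)}) e_{n+1}. Then its Hilbert-space adjoint T* satisfies T* e_0 = 0 and T* e_n = √(1 − q^{2n}) e_{n−1} for n ≥ 1, and the operator identity T*T = q² T T* + (1 − q²)·I holds. (This realizes the defining relation z*z = q² z z* + (1 − q²) of the quantum disc in the Fock representation.) -/
noncomputable section

open ContinuousLinearMap

/-- The standard orthonormal basis vectors of `ℓ²(ℕ, ℂ)`. -/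
def fockBasis (n : ℕ) : lp (fun _ : ℕ => ℂ) 2 := lp.single 2 n 1

local notation "H" => lp (fun _ : ℕ => ℂ) 2

lemma fockBasis_coord (x : H) (k : ℕ) : x k = @inner ℂ _ _ (fockBasis k) x := by
  rw [fockBasis, lp.inner_single_left]
  simp

lemma ext_of_basis {A B : H →L[ℂ] H}
    (h : ∀ n, A (fockBasis n) = B (fockBasis n)) : A = B := by
  refine ContinuousLinearMap.ext fun x => ?_
  have hx := lp.hasSum_single ENNReal.ofNat_ne_top x
  have hsingle : ∀ i : ℕ, lp.single (E := fun _ : ℕ => ℂ) 2 i (x i)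
      = x i • fockBasis i := by
    intro i
    rw [fockBasis, ← lp.single_smul]
    norm_num
  have hA : HasSum (fun i : ℕ => A (x i • fockBasis i)) (A x) := by
    simpa [hsingle] using (A.hasSum hx)
  have hB : HasSum (fun i : ℕ => A (x i • fockBasis i)) (B x) := by
    have := B.hasSum hx
    simp only [hsingle] at this
    simpa [map_smul, h] using this
  exact hA.unique hB

theorem quantum_disc_fock_relation (q : ℝ) (hq0 : 0 < q) (hq1 : q < 1)
    (T : lp (fun _ : ℕ => ℂ) 2 →L[ℂ] lp (fun _ : ℕ => ℂ) 2)
    (hT : ∀ n : ℕ, T (fockBasis n) =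
      (Real.sqrt (1 - q ^ (2 * (n + 1))) : ℂ) • fockBasis (n + 1)) :
    (ContinuousLinearMap.adjoint T) (fockBasis 0) = 0 ∧
    (∀ n : ℕ, (ContinuousLinearMap.adjoint T) (fockBasis (n + 1)) =
      (Real.sqrt (1 - q ^ (2 * (n + 1))) : ℂ) • fockBasis n) ∧
    (ContinuousLinearMap.adjoint T) ∘L T =
      ((q : ℂ) ^ 2) • (T ∘L ContinuousLinearMap.adjoint T) +
        ((1 : ℂ) - (q : ℂ) ^ 2) • (1 : lp (fun _ : ℕ => ℂ) 2 →L[ℂ] lp (fun _ : ℕ => ℂ) 2) := by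
  -- component formula for the adjoint
  have hadj : ∀ m k : ℕ, ((ContinuousLinearMap.adjoint T) (fockBasis m)) k
      = if m = k + 1 then (Real.sqrt (1 - q ^ (2 * (k + 1))) : ℂ) else 0 := by
    intro m k
    rw [fockBasis_coord, ContinuousLinearMap.adjoint_inner_right, hT k, inner_smul_left]
    rw [fockBasis, fockBasis, lp.inner_single_left]
    rw [lp.single_apply]
    by_cases h : m = k + 1
    · simp [h, Complex.conj_ofReal]
    · simp only [h, if_false, Complex.conj_ofReal, lp.single_apply]
      rw [Pi.single_apply, if_neg (fun hh : k + 1 = m => h hh.symm)]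
      simp
  have h0 : (ContinuousLinearMap.adjoint T) (fockBasis 0) = 0 := by
    apply lp.ext
    funext k
    have := hadj 0 k
    simpa using this
  have h1 : ∀ n : ℕ, (ContinuousLinearMap.adjoint T) (fockBasis (n + 1)) =
      (Real.sqrt (1 - q ^ (2 * (n + 1))) : ℂ) • fockBasis n := by
    intro n
    apply lp.ext
    funext k
    rw [hadj (n + 1) k]
    show _ = ((Real.sqrt (1 - q ^ (2 * (n + 1))) : ℂ) • fockBasis n) k
    rw [lp.coeFn_smul, Pi.smul_apply, fockBasis, lp.single_apply]
    by_cases h : n = k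
    · subst h; simp
    · have h' : ¬ (n + 1 = k + 1) := by omega
      have h'' : ¬ (k = n) := fun hh => h hh.symm
      simp [h', h'', h]
  refine ⟨h0, h1, ?_⟩
  apply ext_of_basis
  intro n
  have hsq : ∀ m : ℕ, (Real.sqrt (1 - q ^ (2 * (m + 1))) : ℂ) *
      (Real.sqrt (1 - q ^ (2 * (m + 1))) : ℂ) = (1 : ℂ) - (q : ℂ) ^ (2 * (m + 1)) := by
    intro m
    rw [← Complex.ofReal_mul, Real.mul_self_sqrt]
    · push_cast; ring
    · have : q ^ (2 * (m + 1)) < 1 := by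
        apply pow_lt_one₀ (le_of_lt hq0) hq1; omega
      linarith
  cases n with
  | zero =>
    simp only [ContinuousLinearMap.comp_apply, ContinuousLinearMap.add_apply,
      ContinuousLinearMap.smul_apply, ContinuousLinearMap.one_apply, hT, map_smul, h0, h1,
      smul_zero, smul_smul, map_zero]
    rw [hsq 0]
    norm_num
  | succ n =>
    simp only [ContinuousLinearMap.comp_apply, ContinuousLinearMap.add_apply,
      ContinuousLinearMap.smul_apply, ContinuousLinearMap.one_apply, hT, map_smul, h1,
      smul_smul]
    rw [hsq n, hsq (n + 1)]
    rw [← add_smul]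
    congr 1
    ring
end
end

section
/- The self-adjoint operator Y = I − T T* satisfies Y e_n = q^{2n} e_n for every n ∈ ℕ, Y is compact, and the spectrum of Y is exactly the set {q^{2n} : n ∈ ℕ} ∪ {0}. -/
noncomputable section

open ContinuousLinearMap
open scoped ENNReal

namespace FockAux

local notation "ℓ2" => lp (fun _ : ℕ => ℂ) 2

lemma two_toReal : ((2 : ℝ≥0∞)).toReal = 2 := by norm_num

lemma memℓp_diag {d : ℕ → ℂ} {C : ℝ} (hd : ∀ n, ‖d n‖ ≤ C) (x : ℓ2) :
    Memℓp (fun n => d n * x n) 2 := by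
  have hC : 0 ≤ C := (norm_nonneg (d 0)).trans (hd 0)
  apply memℓp_gen
  have hx := (lp.memℓp x).summable (by rw [two_toReal]; norm_num)
  refine Summable.of_nonneg_of_le (fun n => Real.rpow_nonneg (norm_nonneg _) _)
    (fun n => ?_) (hx.mul_left (C ^ (2:ℝ≥0∞).toReal))
  calc ‖d n * x n‖ ^ (2:ℝ≥0∞).toReal ≤ (C * ‖x n‖) ^ (2:ℝ≥0∞).toReal := by
        apply Real.rpow_le_rpow (norm_nonneg _) ?_ (by rw [two_toReal]; norm_num)
        rw [norm_mul]
        exact mul_le_mul_of_nonneg_right (hd n) (norm_nonneg _)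
    _ = C ^ (2:ℝ≥0∞).toReal * ‖x n‖ ^ (2:ℝ≥0∞).toReal :=
        Real.mul_rpow hC (norm_nonneg _)

/-- The diagonal operator with entries `d`. -/
def diagL (d : ℕ → ℂ) (C : ℝ) (hd : ∀ n, ‖d n‖ ≤ C) : ℓ2 →L[ℂ] ℓ2 :=
  LinearMap.mkContinuous
    { toFun := fun x => ⟨fun n => d n * x n, memℓp_diag hd x⟩
      map_add' := fun x y => by
        apply lp.ext
        funext n
        simp only [lp.coeFn_add, Pi.add_apply]
        change d n * (x n + y n) = d n * x n + d n * y n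
        ring
      map_smul' := fun c x => by
        apply lp.ext
        funext n
        simp only [lp.coeFn_smul, Pi.smul_apply, RingHom.id_apply]
        change d n * (c * x n) = c * (d n * x n)
        ring }
    C
    (by
      intro x
      have hC : 0 ≤ C := (norm_nonneg (d 0)).trans (hd 0)
      have h2 : 0 < (2:ℝ≥0∞).toReal := by rw [two_toReal]; norm_num
      apply lp.norm_le_of_forall_sum_le h2 (by positivity)
      intro s
      calc ∑ n ∈ s, ‖d n * x n‖ ^ (2:ℝ≥0∞).toReal
          ≤ ∑ n ∈ s, C ^ (2:ℝ≥0∞).toReal * ‖x n‖ ^ (2:ℝ≥0∞).toReal := by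
            refine Finset.sum_le_sum fun n _ => ?_
            rw [← Real.mul_rpow hC (norm_nonneg _)]
            apply Real.rpow_le_rpow (norm_nonneg _) ?_ h2.le
            rw [norm_mul]
            exact mul_le_mul_of_nonneg_right (hd n) (norm_nonneg _)
        _ = C ^ (2:ℝ≥0∞).toReal * ∑ n ∈ s, ‖x n‖ ^ (2:ℝ≥0∞).toReal := by
            rw [Finset.mul_sum]
        _ ≤ C ^ (2:ℝ≥0∞).toReal * ‖x‖ ^ (2:ℝ≥0∞).toReal := by
            apply mul_le_mul_of_nonneg_left (lp.sum_rpow_le_norm_rpow h2 x s)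
            positivity
        _ = (C * ‖x‖) ^ (2:ℝ≥0∞).toReal := (Real.mul_rpow hC (norm_nonneg _)).symm)

lemma diagL_apply (d : ℕ → ℂ) (C : ℝ) (hd : ∀ n, ‖d n‖ ≤ C) (x : ℓ2) (n : ℕ) :
    (diagL d C hd x) n = d n * x n := rfl

lemma diagL_norm_le (d : ℕ → ℂ) (C : ℝ) (hd : ∀ n, ‖d n‖ ≤ C) :
    ‖diagL d C hd‖ ≤ C :=
  LinearMap.mkContinuous_norm_le _ ((norm_nonneg (d 0)).trans (hd 0)) _

lemma diagL_single (d : ℕ → ℂ) (C : ℝ) (hd : ∀ n, ‖d n‖ ≤ C) (n : ℕ) :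
    diagL d C hd (fockBasis n) = d n • fockBasis n := by
  apply lp.ext
  funext k
  rw [lp.coeFn_smul]
  show d k * (fockBasis n) k = d n • (fockBasis n) k
  by_cases hk : k = n
  · subst hk; rfl
  · have : (fockBasis n) k = 0 := lp.single_apply_ne 2 n 1 hk
    simp [this]

lemma fockBasis_ne_zero (n : ℕ) : fockBasis n ≠ 0 := by
  intro h
  have : (fockBasis n) n = 0 := by rw [h]; rfl
  rw [show (fockBasis n) n = 1 from lp.single_apply_self 2 n 1] at this
  exact one_ne_zero this

/-- Two continuous linear maps on ℓ² agreeing on the basis are equal. -/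
lemma ext_basis {A B : ℓ2 →L[ℂ] ℓ2} (h : ∀ n, A (fockBasis n) = B (fockBasis n)) :
    A = B := by
  refine ContinuousLinearMap.ext fun x => ?_
  have hx : HasSum (fun n : ℕ => lp.single 2 n (x n)) x :=
    lp.hasSum_single ENNReal.ofNat_ne_top x
  have key : ∀ n : ℕ, lp.single 2 n (x n) = x n • fockBasis n := by
    intro n
    rw [fockBasis, ← lp.single_smul, smul_eq_mul, mul_one]
  have hA : HasSum (fun n : ℕ => A (lp.single 2 n (x n))) (A x) := A.hasSum hx
  have hB : HasSum (fun n : ℕ => B (lp.single 2 n (x n))) (B x) := B.hasSum hx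
  refine hA.unique ?_
  convert hB using 2 with n
  rw [key n, map_smul, map_smul, h n]


open scoped ComplexInnerProductSpace in
lemma coord (f : ℓ2) (k : ℕ) : ⟪fockBasis k, f⟫ = f k := by
  rw [fockBasis, lp.inner_single_left]
  simp

lemma isCompactOperator_of_mem_fd {H : Type*} [NormedAddCommGroup H] [NormedSpace ℂ H]
    (f : H →L[ℂ] H) (V : Submodule ℂ H) [FiniteDimensional ℂ V] (hf : ∀ x, f x ∈ V) :
    IsCompactOperator ⇑f := by
  refine ⟨(↑) '' (Metric.closedBall (0 : V) ‖f‖), ?_, ?_⟩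
  · exact (isCompact_closedBall (0 : V) ‖f‖).image continuous_subtype_val
  · refine Filter.mem_of_superset (Metric.closedBall_mem_nhds (0 : H) one_pos) ?_
    intro x hx
    refine ⟨⟨f x, hf x⟩, ?_, rfl⟩
    rw [Metric.mem_closedBall, dist_zero_right]
    show ‖f x‖ ≤ ‖f‖
    calc ‖f x‖ ≤ ‖f‖ * ‖x‖ := f.le_opNorm x
      _ ≤ ‖f‖ * 1 := by
          apply mul_le_mul_of_nonneg_left _ (norm_nonneg f)
          simpa using Metric.mem_closedBall.mp hx
      _ = ‖f‖ := mul_one _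

open scoped ComplexInnerProductSpace

lemma norm_fockBasis (n : ℕ) : ‖fockBasis n‖ = 1 := by
  have := lp.norm_single (E := fun _ : ℕ => ℂ) (p := 2)
    (by norm_num) n (1 : ℂ)
  simpa [fockBasis] using this

variable {q : ℝ} {T : ℓ2 →L[ℂ] ℓ2}

lemma adj0 (hT : ∀ n : ℕ, T (fockBasis n) =
    (Real.sqrt (1 - q ^ (2 * (n + 1))) : ℂ) • fockBasis (n + 1)) :
    adjoint T (fockBasis 0) = 0 := by
  apply lp.ext
  funext k
  have h1 : (adjoint T (fockBasis 0)) k = ⟪fockBasis k, adjoint T (fockBasis 0)⟫ :=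
    (coord _ k).symm
  rw [h1, ContinuousLinearMap.adjoint_inner_right, hT k, inner_smul_left, coord]
  have : (fockBasis 0) (k + 1) = 0 := lp.single_apply_ne 2 0 1 (Nat.succ_ne_zero k)
  rw [this, mul_zero]
  rfl

lemma adjS (hT : ∀ n : ℕ, T (fockBasis n) =
    (Real.sqrt (1 - q ^ (2 * (n + 1))) : ℂ) • fockBasis (n + 1)) (m : ℕ) :
    adjoint T (fockBasis (m + 1)) =
      (Real.sqrt (1 - q ^ (2 * (m + 1))) : ℂ) • fockBasis m := by
  apply lp.ext
  funext k
  have h1 : (adjoint T (fockBasis (m + 1))) k = ⟪fockBasis k, adjoint T (fockBasis (m + 1))⟫ :=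
    (coord _ k).symm
  rw [lp.coeFn_smul, h1, ContinuousLinearMap.adjoint_inner_right, hT k, inner_smul_left, coord]
  simp only [Pi.smul_apply, smul_eq_mul, Complex.conj_ofReal]
  by_cases hk : k = m
  · subst hk
    rw [show (fockBasis (k + 1)) (k + 1) = 1 from lp.single_apply_self 2 (k+1) 1,
      show (fockBasis k) k = 1 from lp.single_apply_self 2 k 1]
  · have e1 : (fockBasis (m + 1)) (k + 1) = 0 :=
      lp.single_apply_ne 2 (m+1) 1 (fun h => hk (Nat.succ_injective h))
    have e2 : (fockBasis m) k = 0 := lp.single_apply_ne 2 m 1 hk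
    rw [e1, e2, mul_zero, mul_zero]

end FockAux

set_option maxHeartbeats 1000000 in
open FockAux in
theorem fock_Y_spectrum (q : ℝ) (hq0 : 0 < q) (hq1 : q < 1)
    (T : lp (fun _ : ℕ => ℂ) 2 →L[ℂ] lp (fun _ : ℕ => ℂ) 2)
    (hT : ∀ n : ℕ, T (fockBasis n) =
      (Real.sqrt (1 - q ^ (2 * (n + 1))) : ℂ) • fockBasis (n + 1))
    (Y : lp (fun _ : ℕ => ℂ) 2 →L[ℂ] lp (fun _ : ℕ => ℂ) 2)
    (hY : Y = 1 - T ∘L ContinuousLinearMap.adjoint T) :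
    (∀ n : ℕ, Y (fockBasis n) = ((q : ℂ) ^ (2 * n)) • fockBasis n) ∧
    IsCompactOperator (⇑Y) ∧
    spectrum ℂ Y = insert (0 : ℂ) (Set.range fun n : ℕ => ((q : ℂ) ^ (2 * n))) := by
  have hq2 : ∀ n : ℕ, (0:ℝ) ≤ 1 - q ^ (2 * (n + 1)) := fun n => by
    have h := pow_le_one₀ hq0.le hq1.le (n := 2 * (n + 1))
    linarith
  -- Part 1
  have h1 : ∀ n : ℕ, Y (fockBasis n) = ((q : ℂ) ^ (2 * n)) • fockBasis n := by
    intro n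
    rw [hY]
    cases n with
    | zero =>
      simp only [ContinuousLinearMap.sub_apply, ContinuousLinearMap.one_apply,
        ContinuousLinearMap.comp_apply, adj0 hT, map_zero, sub_zero, Nat.mul_zero,
        pow_zero, one_smul]
    | succ m =>
      rw [ContinuousLinearMap.sub_apply, ContinuousLinearMap.comp_apply, adjS hT m,
        map_smul, hT m, ContinuousLinearMap.one_apply, smul_smul]
      have hc : ((Real.sqrt (1 - q ^ (2 * (m + 1))) : ℂ)) *
          ((Real.sqrt (1 - q ^ (2 * (m + 1))) : ℂ)) = 1 - (q:ℂ) ^ (2 * (m + 1)) := by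
        rw [← Complex.ofReal_mul, Real.mul_self_sqrt (hq2 m)]
        push_cast
        ring
      rw [hc]
      module
  -- diagonal representation
  have hdb : ∀ n : ℕ, ‖((q:ℂ) ^ (2 * n))‖ ≤ 1 := by
    intro n
    rw [norm_pow, Complex.norm_real, Real.norm_eq_abs, abs_of_pos hq0]
    exact pow_le_one₀ hq0.le hq1.le
  have hYd : Y = diagL (fun n => (q:ℂ) ^ (2 * n)) 1 hdb :=
    ext_basis fun n => by rw [h1 n, diagL_single]
  -- compactness
  have hdbN : ∀ N : ℕ, ∀ n : ℕ, ‖(if n < N then (q:ℂ) ^ (2 * n) else 0)‖ ≤ 1 := by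
    intro N n
    split
    · exact hdb n
    · simp
  have hdbR : ∀ N : ℕ, ∀ n : ℕ,
      ‖(if n < N then (q:ℂ) ^ (2 * n) else 0) - (q:ℂ) ^ (2 * n)‖
        ≤ (q ^ 2) ^ N := by
    intro N n
    split
    · rw [sub_self, norm_zero]
      positivity
    · rename_i hn
      rw [zero_sub, norm_neg, norm_pow, Complex.norm_real, Real.norm_eq_abs,
        abs_of_pos hq0, pow_mul]
      exact pow_le_pow_of_le_one (by positivity) (by nlinarith) (by omega)
  have hcomp : IsCompactOperator ⇑Y := by
    rw [hYd]
    set D := diagL (fun n => (q:ℂ) ^ (2 * n)) 1 hdb with hD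
    set F : ℕ → (lp (fun _ : ℕ => ℂ) 2 →L[ℂ] lp (fun _ : ℕ => ℂ) 2) := fun N =>
      diagL (fun n => if n < N then (q:ℂ) ^ (2 * n) else 0) 1 (hdbN N) with hF
    have hFc : ∀ N, IsCompactOperator ⇑(F N) := by
      intro N
      have hfin : (fockBasis '' Set.Iio N).Finite := (Set.finite_Iio N).image _
      haveI : FiniteDimensional ℂ (Submodule.span ℂ (fockBasis '' Set.Iio N)) :=
        FiniteDimensional.span_of_finite ℂ hfin
      apply isCompactOperator_of_mem_fd (F N) (Submodule.span ℂ (fockBasis '' Set.Iio N))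
      intro x
      have hsum : F N x = ∑ n ∈ Finset.range N, ((q:ℂ) ^ (2 * n) * x n) • fockBasis n := by
        apply lp.ext
        funext k
        rw [lp.coeFn_sum, Finset.sum_apply]
        have hterm : ∀ n : ℕ, (((q:ℂ) ^ (2 * n) * x n) • fockBasis n) k
            = if k = n then (q:ℂ) ^ (2 * n) * x k else 0 := by
          intro n
          rw [lp.coeFn_smul, Pi.smul_apply, smul_eq_mul]
          by_cases hkn : k = n
          · subst hkn
            rw [show (fockBasis k) k = 1 from lp.single_apply_self 2 k 1, if_pos rfl, mul_one]
          · have e : (fockBasis n) k = 0 := lp.single_apply_ne 2 n 1 hkn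
            rw [e, if_neg hkn, mul_zero]
        rw [Finset.sum_congr rfl fun n _ => hterm n, Finset.sum_ite_eq]
        have hL : ((F N) x) k = (if k < N then (q:ℂ) ^ (2 * k) else 0) * x k := rfl
        rw [hL]
        by_cases hk : k < N <;> simp [hk, Finset.mem_range]
      rw [hsum]
      exact Submodule.sum_mem _ fun n hn => Submodule.smul_mem _ _
        (Submodule.subset_span ⟨n, Finset.mem_range.mp hn, rfl⟩)
    have hdiff : ∀ N : ℕ, ‖F N - D‖ ≤ (q ^ 2) ^ N := by
      intro N
      have : F N - D = diagL
          (fun n => (if n < N then (q:ℂ) ^ (2 * n) else 0) - (q:ℂ) ^ (2 * n))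
          ((q ^ 2) ^ N) (hdbR N) := by
        refine ext_basis fun n => ?_
        rw [ContinuousLinearMap.sub_apply, hD, hF, diagL_single, diagL_single, diagL_single,
          ← sub_smul]
      rw [this]
      exact diagL_norm_le _ _ _
    have htend : Filter.Tendsto F Filter.atTop (nhds D) := by
      rw [tendsto_iff_dist_tendsto_zero]
      refine squeeze_zero (fun N => dist_nonneg) (fun N => ?_)
        (tendsto_pow_atTop_nhds_zero_of_lt_one (r := q ^ 2) (by positivity) (by nlinarith))
      rw [dist_eq_norm]
      exact hdiff N
    exact isCompactOperator_of_tendsto htend (Filter.Eventually.of_forall hFc)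
  -- spectrum
  have hqlt : (0:ℝ) ≤ q ^ 2 := by positivity
  have hq2lt : q ^ 2 < 1 := by nlinarith
  have hnorm_d : ∀ n : ℕ, ‖(q:ℂ) ^ (2 * n)‖ = (q ^ 2) ^ n := by
    intro n
    rw [norm_pow, Complex.norm_real, Real.norm_eq_abs, abs_of_pos hq0, pow_mul]
  have hsub : insert (0 : ℂ) (Set.range fun n : ℕ => ((q : ℂ) ^ (2 * n))) ⊆ spectrum ℂ Y := by
    intro μ hμ
    rw [spectrum.mem_iff]
    intro hu
    obtain ⟨u, hu⟩ := hu
    have hBA : (↑u⁻¹ : lp (fun _ : ℕ => ℂ) 2 →L[ℂ] lp (fun _ : ℕ => ℂ) 2) *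
        (algebraMap ℂ _ μ - Y) = 1 := by rw [← hu]; exact u.inv_mul
    have happ : ∀ n : ℕ, (↑u⁻¹ : lp (fun _ : ℕ => ℂ) 2 →L[ℂ] lp (fun _ : ℕ => ℂ) 2)
        ((algebraMap ℂ _ μ - Y) (fockBasis n)) = fockBasis n := by
      intro n
      have h := congrArg (fun (A : lp (fun _ : ℕ => ℂ) 2 →L[ℂ] lp (fun _ : ℕ => ℂ) 2) =>
        A (fockBasis n)) hBA
      simpa only [ContinuousLinearMap.mul_apply, ContinuousLinearMap.one_apply] using h
    have hAe : ∀ n : ℕ, (algebraMap ℂ (lp (fun _ : ℕ => ℂ) 2 →L[ℂ] lp (fun _ : ℕ => ℂ) 2) μ - Y)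
        (fockBasis n) = (μ - (q:ℂ) ^ (2 * n)) • fockBasis n := by
      intro n
      rw [ContinuousLinearMap.sub_apply, Algebra.algebraMap_eq_smul_one,
        ContinuousLinearMap.smul_apply, ContinuousLinearMap.one_apply, h1 n, sub_smul]
    rcases Set.mem_insert_iff.mp hμ with h0 | hr
    · subst h0
      set B := (↑u⁻¹ : lp (fun _ : ℕ => ℂ) 2 →L[ℂ] lp (fun _ : ℕ => ℂ) 2) with hB
      have key : ∀ n : ℕ, (1:ℝ) ≤ (q ^ 2) ^ n * ‖B‖ := by
        intro n
        have h := happ n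
        rw [hAe n, zero_sub, map_smul] at h
        have hnorm := congrArg norm h
        rw [norm_smul, norm_fockBasis, norm_neg, hnorm_d n] at hnorm
        calc (1:ℝ) = (q ^ 2) ^ n * ‖B (fockBasis n)‖ := hnorm.symm
          _ ≤ (q ^ 2) ^ n * (‖B‖ * ‖fockBasis n‖) := by
              apply mul_le_mul_of_nonneg_left (B.le_opNorm _) (by positivity)
          _ = (q ^ 2) ^ n * ‖B‖ := by rw [norm_fockBasis, mul_one]
      have htend := (tendsto_pow_atTop_nhds_zero_of_lt_one hqlt hq2lt).mul_const ‖B‖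
      rw [zero_mul] at htend
      obtain ⟨n, hn⟩ := (htend.eventually_lt_const one_pos).exists
      exact absurd (key n) (not_le.mpr hn)
    · obtain ⟨n, hn⟩ := hr
      simp only at hn
      have h := happ n
      rw [hAe n, ← hn, sub_self, zero_smul, map_zero] at h
      exact fockBasis_ne_zero n h.symm
  have hunit : ∀ μ : ℂ, μ ∉ insert (0 : ℂ) (Set.range fun n : ℕ => ((q : ℂ) ^ (2 * n))) →
      IsUnit (algebraMap ℂ (lp (fun _ : ℕ => ℂ) 2 →L[ℂ] lp (fun _ : ℕ => ℂ) 2) μ - Y) := by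
    intro μ hμ
    have hμ0 : μ ≠ 0 := fun h => hμ (by rw [h]; exact Set.mem_insert 0 _)
    have hμn : ∀ n : ℕ, μ - (q:ℂ) ^ (2 * n) ≠ 0 := by
      intro n h
      exact hμ (Set.mem_insert_iff.mpr (Or.inr ⟨n, (sub_eq_zero.mp h).symm⟩))
    have hμpos : 0 < ‖μ‖ := norm_pos_iff.mpr hμ0
    obtain ⟨N, hN⟩ := Filter.eventually_atTop.mp
      ((tendsto_pow_atTop_nhds_zero_of_lt_one hqlt hq2lt).eventually_lt_const
        (by positivity : (0:ℝ) < ‖μ‖ / 2))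
    have hFpos : ∀ n : ℕ, 0 < ‖μ - (q:ℂ) ^ (2 * n)‖ := fun n => norm_pos_iff.mpr (hμn n)
    set ε : ℝ := min (‖μ‖ / 2) ((Finset.range (N + 1)).inf'
      ⟨0, Finset.mem_range.mpr (Nat.succ_pos N)⟩ (fun n => ‖μ - (q:ℂ) ^ (2 * n)‖)) with hε
    have hεpos : 0 < ε := by
      refine lt_min (by positivity) ?_
      apply (Finset.lt_inf'_iff _).mpr
      exact fun n _ => hFpos n
    have hεle : ∀ n : ℕ, ε ≤ ‖μ - (q:ℂ) ^ (2 * n)‖ := by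
      intro n
      rcases le_or_gt n N with h | h
      · exact (min_le_right _ _).trans (Finset.inf'_le _ (Finset.mem_range.mpr
          (Nat.lt_succ_of_le h)))
      · refine (min_le_left _ _).trans ?_
        have hc : ‖(q:ℂ) ^ (2 * n)‖ ≤ ‖μ‖ / 2 := by
          rw [hnorm_d n]
          exact (hN n h.le).le
        have h2 := norm_sub_norm_le μ ((q:ℂ) ^ (2 * n))
        linarith
    have hdinv : ∀ n : ℕ, ‖(μ - (q:ℂ) ^ (2 * n))⁻¹‖ ≤ ε⁻¹ := by
      intro n
      rw [norm_inv]
      exact inv_anti₀ hεpos (hεle n)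
    set R := diagL (fun n => (μ - (q:ℂ) ^ (2 * n))⁻¹) ε⁻¹ hdinv with hR
    have hAe : ∀ n : ℕ, (algebraMap ℂ (lp (fun _ : ℕ => ℂ) 2 →L[ℂ] lp (fun _ : ℕ => ℂ) 2) μ - Y)
        (fockBasis n) = (μ - (q:ℂ) ^ (2 * n)) • fockBasis n := by
      intro n
      rw [ContinuousLinearMap.sub_apply, Algebra.algebraMap_eq_smul_one,
        ContinuousLinearMap.smul_apply, ContinuousLinearMap.one_apply, h1 n, sub_smul]
    have h₁ : (algebraMap ℂ (lp (fun _ : ℕ => ℂ) 2 →L[ℂ] lp (fun _ : ℕ => ℂ) 2) μ - Y) * R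
        = 1 := by
      refine ext_basis fun n => ?_
      rw [ContinuousLinearMap.mul_apply, hR, diagL_single, map_smul, hAe n, smul_smul,
        inv_mul_cancel₀ (hμn n), one_smul, ContinuousLinearMap.one_apply]
    have h₂ : R * (algebraMap ℂ (lp (fun _ : ℕ => ℂ) 2 →L[ℂ] lp (fun _ : ℕ => ℂ) 2) μ - Y)
        = 1 := by
      refine ext_basis fun n => ?_
      rw [ContinuousLinearMap.mul_apply, hAe n, map_smul, hR, diagL_single, smul_smul,
        mul_inv_cancel₀ (hμn n), one_smul, ContinuousLinearMap.one_apply]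
    exact ⟨⟨_, R, h₁, h₂⟩, rfl⟩
  refine ⟨h1, hcomp, ?_⟩
  apply Set.eq_of_subset_of_subset _ hsub
  intro μ hsp
  by_contra hc
  exact spectrum.notMem_iff.mpr (hunit μ hc) hsp
end
end

section
/- The Fock representation of the quantum disc is irreducible: if M is a closed subspace of ℓ²(ℕ, ℂ) that is invariant under both T and T*, then M = {0} or M = ℓ²(ℕ, ℂ). -/
noncomputable section

open ContinuousLinearMap

open scoped InnerProductSpace

lemma fock_coord (f : lp (fun _ : ℕ => ℂ) 2) (n : ℕ) : ⟪fockBasis n, f⟫_ℂ = f n := by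
  simp [fockBasis, lp.inner_single_left, RCLike.inner_apply]

lemma fock_apply (n m : ℕ) : (fockBasis n) m = if m = n then 1 else 0 := by
  rcases eq_or_ne m n with rfl | h
  · simp [fockBasis, lp.single_apply_self]
  · simp [fockBasis, lp.single_apply_ne _ _ _ h, h]

lemma norm_le_of_coord (f g : lp (fun _ : ℕ => ℂ) 2) (h : ∀ n, ‖f n‖ ≤ ‖g n‖) :
    ‖f‖ ≤ ‖g‖ := by
  have hp : 0 < (2 : ENNReal).toReal := by norm_num
  rw [← Real.rpow_le_rpow_iff (norm_nonneg _) (norm_nonneg _) hp,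
    lp.norm_rpow_eq_tsum hp, lp.norm_rpow_eq_tsum hp]
  exact Summable.tsum_le_tsum (fun n => Real.rpow_le_rpow (norm_nonneg _) (h n) hp.le)
    ((lp.memℓp f).summable hp) ((lp.memℓp g).summable hp)

set_option maxHeartbeats 1000000 in
theorem fock_representation_irreducible (q : ℝ) (hq0 : 0 < q) (hq1 : q < 1)
    (T : lp (fun _ : ℕ => ℂ) 2 →L[ℂ] lp (fun _ : ℕ => ℂ) 2)
    (hT : ∀ n : ℕ, T (fockBasis n) =
      (Real.sqrt (1 - q ^ (2 * (n + 1))) : ℂ) • fockBasis (n + 1)) :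
    ∀ M : Submodule ℂ (lp (fun _ : ℕ => ℂ) 2),
      IsClosed (M : Set (lp (fun _ : ℕ => ℂ) 2)) →
      (∀ x ∈ M, T x ∈ M) →
      (∀ x ∈ M, (ContinuousLinearMap.adjoint T) x ∈ M) →
      M = ⊥ ∨ M = ⊤ := by
  classical
  intro M hMc hMT hMS
  rcases eq_or_ne M ⊥ with hbot | hbot
  · exact Or.inl hbot
  right
  set S := ContinuousLinearMap.adjoint T with hSdef
  have hqpow : ∀ n : ℕ, q ^ (2 * (n + 1)) < 1 := fun n =>
    pow_lt_one₀ hq0.le hq1 (by omega)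
  have hc_sq : ∀ n : ℕ, (Real.sqrt (1 - q ^ (2 * (n + 1)))) ^ 2 = 1 - q ^ (2 * (n + 1)) :=
    fun n => Real.sq_sqrt (by linarith [hqpow n])
  have hc_pos : ∀ n : ℕ, 0 < Real.sqrt (1 - q ^ (2 * (n + 1))) := fun n =>
    Real.sqrt_pos.2 (by linarith [hqpow n])
  -- action of the adjoint on the basis
  have hS1 : ∀ n : ℕ, S (fockBasis (n + 1)) =
      (Real.sqrt (1 - q ^ (2 * (n + 1))) : ℂ) • fockBasis n := by
    intro n
    apply lp.ext; funext k
    rw [← fock_coord, hSdef, ContinuousLinearMap.adjoint_inner_right, hT k,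
      inner_smul_left, fock_coord]
    have hsm : ((Real.sqrt (1 - q ^ (2 * (n + 1))) : ℂ) • fockBasis n) k
        = (Real.sqrt (1 - q ^ (2 * (n + 1))) : ℂ) * (fockBasis n) k := by
      rw [lp.coeFn_smul]; simp
    rw [hsm, fock_apply, fock_apply]
    rcases eq_or_ne k n with rfl | h
    · simp [Complex.conj_ofReal]
    · simp [h, fun hh => h (Nat.succ_injective hh)]
  -- the operator A = 1 - S ∘ T
  set A : lp (fun _ : ℕ => ℂ) 2 →L[ℂ] lp (fun _ : ℕ => ℂ) 2 := 1 - S ∘L T with hAdef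
  have hAapp : ∀ y, A y = y - S (T y) := by
    intro y; rw [hAdef]; simp
  have hAadj : ContinuousLinearMap.adjoint A = A := by
    rw [hAdef, map_sub, adjoint_comp, hSdef, adjoint_adjoint, ContinuousLinearMap.one_def,
      adjoint_id]
  have hAe : ∀ n : ℕ, A (fockBasis n) = ((q ^ (2 * (n + 1)) : ℝ) : ℂ) • fockBasis n := by
    intro n
    rw [hAapp, hT n, map_smul, hS1 n, smul_smul]
    have h1 : ((Real.sqrt (1 - q ^ (2 * (n + 1))) : ℂ)) * (Real.sqrt (1 - q ^ (2 * (n + 1))) : ℂ)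
        = ((1 - q ^ (2 * (n + 1)) : ℝ) : ℂ) := by
      rw [← Complex.ofReal_mul, ← sq, hc_sq n]
    rw [h1, eq_comm, eq_sub_iff_add_eq, ← add_smul]
    have h2 : ((q ^ (2 * (n + 1)) : ℝ) : ℂ) + ((1 - q ^ (2 * (n + 1)) : ℝ) : ℂ) = 1 := by
      push_cast; ring
    rw [h2, one_smul]
  -- coordinates of A y and of (A ^ k) y
  have hAcoord : ∀ (y : lp (fun _ : ℕ => ℂ) 2) (n : ℕ),
      (A y) n = ((q ^ (2 * (n + 1)) : ℝ) : ℂ) * y n := by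
    intro y n
    rw [← fock_coord]
    conv_lhs => rw [← hAadj]
    rw [ContinuousLinearMap.adjoint_inner_right, hAe n, inner_smul_left, fock_coord,
      Complex.conj_ofReal]
  have hAkcoord : ∀ (k : ℕ) (y : lp (fun _ : ℕ => ℂ) 2) (n : ℕ),
      ((A ^ k) y) n = ((q ^ (2 * (n + 1)) : ℝ) : ℂ) ^ k * y n := by
    intro k
    induction k with
    | zero => intro y n; simp
    | succ k ih =>
      intro y n
      rw [pow_succ, ContinuousLinearMap.mul_apply, ih, hAcoord, pow_succ]
      ring
  -- pick a nonzero element of M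
  obtain ⟨x, hxM, hx0⟩ := M.ne_bot_iff.mp hbot
  have hex : ∃ n, x n ≠ 0 := by
    by_contra hno
    push_neg at hno
    exact hx0 (by apply lp.ext; funext n; simpa using hno n)
  set n0 := Nat.find hex with hn0
  have hxn0 : x n0 ≠ 0 := Nat.find_spec hex
  have hxlt : ∀ n < n0, x n = 0 := fun n hn => by
    by_contra hc; exact Nat.find_min hex hn hc
  -- the approximating sequence
  set u : ℕ → lp (fun _ : ℕ => ℂ) 2 :=
    fun k => ((((q ^ (2 * (n0 + 1))) ^ k)⁻¹ : ℝ) : ℂ) • ((A ^ k) x) with hudef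
  have hAkM : ∀ k, (A ^ k) x ∈ M := by
    intro k
    induction k with
    | zero => simpa using hxM
    | succ k ih =>
      rw [pow_succ', ContinuousLinearMap.mul_apply, hAapp]
      exact M.sub_mem ih (hMS _ (hMT _ ih))
  have huM : ∀ k, u k ∈ M := fun k => M.smul_mem _ (hAkM k)
  set L : lp (fun _ : ℕ => ℂ) 2 := x n0 • fockBasis n0 with hLdef
  -- coordinatewise bound on `u k - L`
  have hcoordbound : ∀ k n, ‖(u k - L) n‖ ≤ ‖((((q ^ 2) ^ k : ℝ) : ℂ) • x) n‖ := by
    intro k n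
    have hsub : (u k - L) n = u k n - L n := by rw [lp.coeFn_sub]; simp
    have huk : u k n = ((((q ^ (2 * (n0 + 1))) ^ k)⁻¹ : ℝ) : ℂ) *
        (((q ^ (2 * (n + 1)) : ℝ) : ℂ) ^ k * x n) := by
      simp only [hudef]
      have h3 : (((((q ^ (2 * (n0 + 1))) ^ k)⁻¹ : ℝ) : ℂ) • ((A ^ k) x)) n
          = ((((q ^ (2 * (n0 + 1))) ^ k)⁻¹ : ℝ) : ℂ) * ((A ^ k) x) n := by
        rw [lp.coeFn_smul]; simp
      rw [h3, hAkcoord]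
    have hLn : L n = x n0 * (fockBasis n0) n := by
      simp only [hLdef]
      rw [lp.coeFn_smul]; simp
    have hg : (((((q ^ 2) ^ k : ℝ) : ℂ)) • x) n = (((q ^ 2) ^ k : ℝ) : ℂ) * x n := by
      rw [lp.coeFn_smul]; simp
    rcases lt_trichotomy n n0 with hlt | heq | hgt
    · rw [hsub, huk, hLn, fock_apply, if_neg hlt.ne, hxlt n hlt, hg]
      simp only [mul_zero, sub_zero, norm_zero]
      positivity
    · subst heq
      rw [hsub, huk, hLn, fock_apply, if_pos rfl, mul_one, hg]
      have h4 : ((((q ^ (2 * (n0 + 1))) ^ k)⁻¹ : ℝ) : ℂ) *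
          (((q ^ (2 * (n0 + 1)) : ℝ) : ℂ) ^ k * x n0) = x n0 := by
        rw [← Complex.ofReal_pow, ← mul_assoc, ← Complex.ofReal_mul,
          inv_mul_cancel₀ (by positivity : ((q ^ (2 * (n0 + 1))) ^ k : ℝ) ≠ 0)]
        simp
      rw [h4, sub_self, norm_zero]
      exact norm_nonneg _
    · rw [hsub, huk, hLn, fock_apply, if_neg (by omega : ¬ n = n0), mul_zero, sub_zero, hg]
      have hsplit : q ^ (2 * (n + 1)) = q ^ (2 * (n0 + 1)) * q ^ (2 * (n - n0)) := by
        rw [← pow_add]; congr 1; omega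
      have hsplitk : (((q ^ (2 * (n0 + 1))) ^ k : ℝ))⁻¹ * (q ^ (2 * (n + 1))) ^ k
          = (q ^ (2 * (n - n0))) ^ k := by
        rw [hsplit, mul_pow, ← mul_assoc,
          inv_mul_cancel₀ (by positivity : ((q ^ (2 * (n0 + 1))) ^ k : ℝ) ≠ 0), one_mul]
      calc ‖((((q ^ (2 * (n0 + 1))) ^ k)⁻¹ : ℝ) : ℂ) *
              (((q ^ (2 * (n + 1)) : ℝ) : ℂ) ^ k * x n)‖
          = ((((q ^ (2 * (n0 + 1))) ^ k : ℝ))⁻¹ * (q ^ (2 * (n + 1))) ^ k) * ‖x n‖ := by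
            rw [← Complex.ofReal_pow, ← mul_assoc, ← Complex.ofReal_mul, norm_mul,
              Complex.norm_real, Real.norm_eq_abs, abs_of_nonneg (by positivity)]
        _ = (q ^ (2 * (n - n0))) ^ k * ‖x n‖ := by rw [hsplitk]
        _ ≤ (q ^ 2) ^ k * ‖x n‖ := by
            apply mul_le_mul_of_nonneg_right _ (norm_nonneg _)
            apply pow_le_pow_left₀ (by positivity)
            exact pow_le_pow_of_le_one hq0.le hq1.le (by omega)
        _ = ‖(((q ^ 2) ^ k : ℝ) : ℂ) * x n‖ := by
            rw [norm_mul, Complex.norm_real, Real.norm_eq_abs,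
              abs_of_nonneg (by positivity)]
  have hnormbound : ∀ k, ‖u k - L‖ ≤ (q ^ 2) ^ k * ‖x‖ := by
    intro k
    refine (norm_le_of_coord _ _ (hcoordbound k)).trans_eq ?_
    rw [norm_smul, Complex.norm_real, Real.norm_eq_abs, abs_of_nonneg (by positivity)]
  have htend : Filter.Tendsto u Filter.atTop (nhds L) := by
    rw [← tendsto_sub_nhds_zero_iff]
    apply squeeze_zero_norm hnormbound
    have h1 : Filter.Tendsto (fun k : ℕ => (q ^ 2) ^ k) Filter.atTop (nhds 0) :=
      tendsto_pow_atTop_nhds_zero_of_lt_one (by positivity) (by nlinarith)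
    simpa using h1.mul_const ‖x‖
  have hLM : L ∈ M := hMc.mem_of_tendsto htend (Filter.Eventually.of_forall huM)
  have hbn0 : fockBasis n0 ∈ M := by
    have h5 := M.smul_mem (x n0)⁻¹ hLM
    rwa [hLdef, inv_smul_smul₀ hxn0] at h5
  -- go down to `fockBasis 0`, then up to all of them
  have hdown : ∀ m, fockBasis (m + 1) ∈ M → fockBasis m ∈ M := by
    intro m hm
    have h1 := hMS _ hm
    rw [hS1 m] at h1
    have h6 := M.smul_mem ((Real.sqrt (1 - q ^ (2 * (m + 1))) : ℂ))⁻¹ h1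
    rwa [inv_smul_smul₀ (by exact_mod_cast (hc_pos m).ne')] at h6
  have h0 : fockBasis 0 ∈ M := by
    have hgen : ∀ m, fockBasis m ∈ M → fockBasis 0 ∈ M := by
      intro m
      induction m with
      | zero => exact id
      | succ m ih => exact fun h => ih (hdown m h)
    exact hgen n0 hbn0
  have hall : ∀ n, fockBasis n ∈ M := by
    intro n
    induction n with
    | zero => exact h0
    | succ n ih =>
      have h1 := hMT _ ih
      rw [hT n] at h1
      have h7 := M.smul_mem ((Real.sqrt (1 - q ^ (2 * (n + 1))) : ℂ))⁻¹ h1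
      rwa [inv_smul_smul₀ (by exact_mod_cast (hc_pos n).ne')] at h7
  -- conclude `M = ⊤`
  have horth : Mᗮ = ⊥ := by
    rw [Submodule.eq_bot_iff]
    intro y hy
    apply lp.ext; funext n
    have h8 := (Submodule.mem_orthogonal M y).mp hy (fockBasis n) (hall n)
    rw [fock_coord] at h8
    simpa using h8
  haveI : CompleteSpace M := hMc.completeSpace_coe
  exact Submodule.orthogonal_eq_bot_iff.mp horth
end
end

section
/- The monomials {z^k w^j : k, j ∈ ℕ} form a basis of the quantum disc algebra Pol(ℂ)_q as a ℂ-vector space; i.e., every element of Pol(ℂ)_q has a unique expansion as a finite ℂ-linear combination of the elements z^k w^j. -/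
noncomputable section

/-- The defining relation of the quantum disc algebra: `w z = q² z w + (1 − q²)·1`,
where `true` encodes the generator `z` and `false` the generator `w`. -/
inductive DiscRel (q : ℝ) : FreeAlgebra ℂ Bool → FreeAlgebra ℂ Bool → Prop
  | rel : DiscRel q (FreeAlgebra.ι ℂ false * FreeAlgebra.ι ℂ true)
      (((q : ℂ) ^ 2) • (FreeAlgebra.ι ℂ true * FreeAlgebra.ι ℂ false) +
        ((1 : ℂ) - (q : ℂ) ^ 2) • (1 : FreeAlgebra ℂ Bool))

/-- The quantum disc algebra `Pol(ℂ)_q`. -/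
abbrev PolDisc (q : ℝ) := RingQuot (DiscRel q)

/-- The generator `z` of the quantum disc algebra. -/
def zGen (q : ℝ) : PolDisc q := RingQuot.mkAlgHom ℂ (DiscRel q) (FreeAlgebra.ι ℂ true)

/-- The generator `w = z*` of the quantum disc algebra. -/
def wGen (q : ℝ) : PolDisc q := RingQuot.mkAlgHom ℂ (DiscRel q) (FreeAlgebra.ι ℂ false)

namespace PolDiscAux

/-- The representation space: finitely supported functions on `ℕ × ℕ`. -/
abbrev V := (ℕ × ℕ) →₀ ℂ

/-- Action of `z` on a basis vector. -/
def zAct (p : ℕ × ℕ) : V := Finsupp.single (p.1 + 1, p.2) 1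

/-- Action of `w` on a basis vector. -/
def wAct (q : ℝ) (p : ℕ × ℕ) : V :=
  ((q : ℂ) ^ (2 * p.1)) • Finsupp.single (p.1, p.2 + 1) 1 +
    (1 - (q : ℂ) ^ (2 * p.1)) • Finsupp.single (p.1 - 1, p.2) 1

def Lz : V →ₗ[ℂ] V := Finsupp.lsum ℂ fun p => LinearMap.toSpanSingleton ℂ V (zAct p)

def Lw (q : ℝ) : V →ₗ[ℂ] V :=
  Finsupp.lsum ℂ fun p => LinearMap.toSpanSingleton ℂ V (wAct q p)

lemma Lz_single (p : ℕ × ℕ) (c : ℂ) : Lz (Finsupp.single p c) = c • zAct p := by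
  simp [Lz, LinearMap.toSpanSingleton_apply]

lemma Lw_single (q : ℝ) (p : ℕ × ℕ) (c : ℂ) :
    Lw q (Finsupp.single p c) = c • wAct q p := by
  simp [Lw, LinearMap.toSpanSingleton_apply]

lemma end_rel (q : ℝ) :
    Lw q * Lz = ((q : ℂ) ^ 2) • (Lz * Lw q) + ((1 : ℂ) - (q : ℂ) ^ 2) • (1 : Module.End ℂ V) := by
  apply Finsupp.lhom_ext
  rintro ⟨k, j⟩ b
  rw [show (Finsupp.single ((k, j) : ℕ × ℕ) b : V) = b • Finsupp.single (k, j) 1 from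
    (Finsupp.smul_single_one _ _).symm]
  simp only [Module.End.mul_apply, LinearMap.add_apply, LinearMap.smul_apply,
    Module.End.one_apply, Lz_single, Lw_single, map_smul, zAct, wAct, map_add,
    smul_add, smul_smul]
  cases k with
  | zero =>
      simp only [Nat.zero_sub, Nat.sub_zero, mul_zero, pow_zero, Lz_single, zAct, smul_smul]
      match_scalars <;> ring
  | succ k =>
      simp only [Nat.succ_sub_one, Lz_single, zAct, smul_smul]
      match_scalars <;> ring

/-- The free algebra representation. -/
def F (q : ℝ) : FreeAlgebra ℂ Bool →ₐ[ℂ] Module.End ℂ V :=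
  FreeAlgebra.lift ℂ (fun b => if b then Lz else Lw q)

lemma F_rel (q : ℝ) : ∀ ⦃x y : FreeAlgebra ℂ Bool⦄, DiscRel q x y → F q x = F q y := by
  rintro x y ⟨⟩
  simp only [map_mul, map_add, map_smul, map_one, F, FreeAlgebra.lift_ι_apply]
  simpa using end_rel q

/-- The representation of the quantum disc algebra. -/
def ρ (q : ℝ) : PolDisc q →ₐ[ℂ] Module.End ℂ V :=
  RingQuot.liftAlgHom ℂ ⟨F q, F_rel q⟩

lemma ρ_z (q : ℝ) : ρ q (zGen q) = Lz := by
  rw [zGen, ρ, RingQuot.liftAlgHom_mkAlgHom_apply]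
  simp [F]

lemma ρ_w (q : ℝ) : ρ q (wGen q) = Lw q := by
  rw [wGen, ρ, RingQuot.liftAlgHom_mkAlgHom_apply]
  simp [F]

/-- Evaluation of the representation at the vacuum vector. -/
def φ (q : ℝ) : PolDisc q →ₗ[ℂ] V :=
  (LinearMap.applyₗ (Finsupp.single ((0 : ℕ), (0 : ℕ)) (1 : ℂ))).comp (ρ q).toLinearMap

lemma Lw_pow (q : ℝ) (j : ℕ) :
    (Lw q ^ j) (Finsupp.single ((0 : ℕ), (0 : ℕ)) (1 : ℂ)) = Finsupp.single (0, j) 1 := by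
  induction j with
  | zero => simp
  | succ j ih =>
      rw [pow_succ', Module.End.mul_apply, ih, Lw_single]
      simp [wAct]

lemma Lz_pow (k j : ℕ) :
    (Lz ^ k) (Finsupp.single ((0 : ℕ), j) (1 : ℂ)) = Finsupp.single (k, j) 1 := by
  induction k with
  | zero => simp
  | succ k ih =>
      rw [pow_succ', Module.End.mul_apply, ih, Lz_single]
      simp [zAct]

lemma φ_mon (q : ℝ) (k j : ℕ) :
    φ q (zGen q ^ k * wGen q ^ j) = Finsupp.single (k, j) 1 := by
  have : ρ q (zGen q ^ k * wGen q ^ j) = Lz ^ k * Lw q ^ j := by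
    rw [map_mul, map_pow, map_pow, ρ_z, ρ_w]
  simp only [φ, LinearMap.comp_apply, AlgHom.toLinearMap_apply, this]
  show (Lz ^ k * Lw q ^ j) (Finsupp.single ((0 : ℕ), (0 : ℕ)) (1 : ℂ)) = _
  rw [Module.End.mul_apply, Lw_pow q j, Lz_pow k j]

/-- The defining relation inside the quantum disc algebra. -/
lemma wz (q : ℝ) :
    wGen q * zGen q =
      ((q : ℂ) ^ 2) • (zGen q * wGen q) + ((1 : ℂ) - (q : ℂ) ^ 2) • (1 : PolDisc q) := by
  rw [wGen, zGen, ← map_mul, RingQuot.mkAlgHom_rel ℂ (DiscRel.rel (q := q))]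
  simp [map_add, map_smul, map_mul]

lemma w_zpow (q : ℝ) (k : ℕ) :
    wGen q * zGen q ^ (k + 1) =
      ((q : ℂ) ^ (2 * (k + 1))) • (zGen q ^ (k + 1) * wGen q) +
        ((1 : ℂ) - (q : ℂ) ^ (2 * (k + 1))) • zGen q ^ k := by
  induction k with
  | zero => simpa using wz q
  | succ k ih =>
      have h1 : zGen q ^ (k + 2) = zGen q * zGen q ^ (k + 1) := pow_succ' _ _
      rw [h1, ← mul_assoc, wz q, add_mul, smul_mul_assoc, smul_mul_assoc, one_mul,
        mul_assoc, ih, mul_add, mul_smul_comm, mul_smul_comm, ← mul_assoc, ← h1,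
        ← pow_succ']
      match_scalars <;> ring

lemma mon_mul_mem (q : ℝ)
    (S : Submodule ℂ (PolDisc q))
    (hS : ∀ k j : ℕ, zGen q ^ k * wGen q ^ j ∈ S) :
    ∀ j k k' j' : ℕ, (zGen q ^ k * wGen q ^ j) * (zGen q ^ k' * wGen q ^ j') ∈ S := by
  intro j
  induction j with
  | zero =>
      intro k k' j'
      have : (zGen q ^ k * wGen q ^ 0) * (zGen q ^ k' * wGen q ^ j')
          = zGen q ^ (k + k') * wGen q ^ j' := by
        rw [pow_zero, mul_one, ← mul_assoc, ← pow_add]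
      rw [this]; exact hS _ _
  | succ j ih =>
      intro k k' j'
      cases k' with
      | zero =>
          have : (zGen q ^ k * wGen q ^ (j + 1)) * (zGen q ^ 0 * wGen q ^ j')
              = zGen q ^ k * wGen q ^ (j + 1 + j') := by
            rw [pow_zero, one_mul, mul_assoc, ← pow_add]
          rw [this]; exact hS _ _
      | succ k'' =>
          have key : (zGen q ^ k * wGen q ^ (j + 1)) * (zGen q ^ (k'' + 1) * wGen q ^ j')
              = ((q : ℂ) ^ (2 * (k'' + 1))) •
                  ((zGen q ^ k * wGen q ^ j) * (zGen q ^ (k'' + 1) * wGen q ^ (j' + 1)))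
                + ((1 : ℂ) - (q : ℂ) ^ (2 * (k'' + 1))) •
                  ((zGen q ^ k * wGen q ^ j) * (zGen q ^ k'' * wGen q ^ j')) := by
            calc (zGen q ^ k * wGen q ^ (j + 1)) * (zGen q ^ (k'' + 1) * wGen q ^ j')
                = (zGen q ^ k * wGen q ^ j) *
                    ((wGen q * zGen q ^ (k'' + 1)) * wGen q ^ j') := by
                  rw [pow_succ]
                  simp only [mul_assoc]
              _ = (zGen q ^ k * wGen q ^ j) *
                    ((((q : ℂ) ^ (2 * (k'' + 1))) • (zGen q ^ (k'' + 1) * wGen q)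
                      + ((1 : ℂ) - (q : ℂ) ^ (2 * (k'' + 1))) • zGen q ^ k'') * wGen q ^ j') := by
                  rw [w_zpow q k'']
              _ = _ := by
                  rw [add_mul, smul_mul_assoc, smul_mul_assoc, mul_add, mul_smul_comm,
                    mul_smul_comm, mul_assoc (zGen q ^ (k'' + 1)), ← pow_succ']
          rw [key]
          exact Submodule.add_mem _ (Submodule.smul_mem _ _ (ih k (k'' + 1) (j' + 1)))
            (Submodule.smul_mem _ _ (ih k k'' j'))

end PolDiscAux

open PolDiscAux in
/-- The monomials `z^k w^j`, `k, j ∈ ℕ`, form a basis of `Pol(ℂ)_q` over `ℂ`. -/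
theorem polDisc_monomial_basis (q : ℝ) (hq0 : 0 < q) (hq1 : q < 1) :
    ∃ B : Module.Basis (ℕ × ℕ) ℂ (PolDisc q),
      ∀ p : ℕ × ℕ, B p = zGen q ^ p.1 * wGen q ^ p.2 := by
  set v : ℕ × ℕ → PolDisc q := fun p => zGen q ^ p.1 * wGen q ^ p.2 with hv
  have li : LinearIndependent ℂ v := by
    apply LinearIndependent.of_comp (φ q)
    have : ⇑(φ q) ∘ v = fun p : ℕ × ℕ => Finsupp.single p (1 : ℂ) := by
      funext p
      simp [hv, φ_mon]
    rw [this, ← Finsupp.coe_basisSingleOne]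
    exact Finsupp.basisSingleOne.linearIndependent
  have hmem : ∀ k j : ℕ, zGen q ^ k * wGen q ^ j ∈ Submodule.span ℂ (Set.range v) :=
    fun k j => Submodule.subset_span ⟨(k, j), rfl⟩
  have hmul : ∀ a b : PolDisc q, a ∈ Submodule.span ℂ (Set.range v) →
      b ∈ Submodule.span ℂ (Set.range v) → a * b ∈ Submodule.span ℂ (Set.range v) := by
    intro a b ha hb
    induction ha using Submodule.span_induction with
    | mem x hx =>
        induction hb using Submodule.span_induction with
        | mem y hy =>
            obtain ⟨p, rfl⟩ := hx
            obtain ⟨p', rfl⟩ := hy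
            exact mon_mul_mem q _ hmem p.2 p.1 p'.1 p'.2
        | zero => simpa using Submodule.zero_mem _
        | add y z _ _ h1 h2 => rw [mul_add]; exact Submodule.add_mem _ h1 h2
        | smul c y _ h1 => rw [mul_smul_comm]; exact Submodule.smul_mem _ _ h1
    | zero => simpa using Submodule.zero_mem _
    | add x y _ _ h1 h2 => rw [add_mul]; exact Submodule.add_mem _ h1 h2
    | smul c x _ h1 => rw [smul_mul_assoc]; exact Submodule.smul_mem _ _ h1
  have hall : ∀ y : FreeAlgebra ℂ Bool,
      RingQuot.mkAlgHom ℂ (DiscRel q) y ∈ Submodule.span ℂ (Set.range v) := by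
    intro y
    induction y using FreeAlgebra.induction with
    | grade0 r =>
        rw [AlgHom.commutes]
        have : (algebraMap ℂ (PolDisc q)) r = r • (zGen q ^ 0 * wGen q ^ 0) := by
          simp [Algebra.smul_def]
        rw [this]
        exact Submodule.smul_mem _ _ (hmem 0 0)
    | grade1 b =>
        cases b
        · have : RingQuot.mkAlgHom ℂ (DiscRel q) (FreeAlgebra.ι ℂ false)
              = zGen q ^ 0 * wGen q ^ 1 := by simp [wGen]
          rw [this]; exact hmem 0 1
        · have : RingQuot.mkAlgHom ℂ (DiscRel q) (FreeAlgebra.ι ℂ true)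
              = zGen q ^ 1 * wGen q ^ 0 := by simp [zGen]
          rw [this]; exact hmem 1 0
    | mul a b ha hb => rw [map_mul]; exact hmul _ _ ha hb
    | add a b ha hb => rw [map_add]; exact Submodule.add_mem _ ha hb
  have hspan : ⊤ ≤ Submodule.span ℂ (Set.range v) := by
    intro x _
    obtain ⟨y, rfl⟩ := RingQuot.mkAlgHom_surjective ℂ (DiscRel q) x
    exact hall y
  exact ⟨Module.Basis.mk li hspan, fun p => Module.Basis.mk_apply li hspan p⟩
end
end

section
/- Let H be a nonzero complex Hilbert space and A a bounded linear operator on H satisfying A*A = q² A A* + (1 − q²)·I. Then the spectrum of the self-adjoint operator Y = I − A A* is contained in the set {q^{2n} : n ∈ ℕ} ∪ {0}. -/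
noncomputable section

open ContinuousLinearMap

theorem quantum_disc_Y_spectrum_subset (q : ℝ) (hq0 : 0 < q) (hq1 : q < 1)
    {H : Type*} [NormedAddCommGroup H] [InnerProductSpace ℂ H] [CompleteSpace H]
    [Nontrivial H]
    (A : H →L[ℂ] H)
    (hA : (ContinuousLinearMap.adjoint A) ∘L A =
      ((q : ℂ) ^ 2) • (A ∘L ContinuousLinearMap.adjoint A) +
        ((1 : ℂ) - (q : ℂ) ^ 2) • (1 : H →L[ℂ] H)) :
    spectrum ℂ (1 - A ∘L ContinuousLinearMap.adjoint A) ⊆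
      insert (0 : ℂ) (Set.range fun n : ℕ => ((q : ℂ) ^ (2 * n))) := by
  set T : H →L[ℂ] H := A ∘L ContinuousLinearMap.adjoint A with hT
  have hq2 : ((q : ℂ) ^ 2) ≠ 0 :=
    pow_ne_zero 2 (Complex.ofReal_ne_zero.mpr hq0.ne')
  -- membership transfer: lam ∈ σ(1 - T) ↔ 1 - lam ∈ σ T
  have hmemT : ∀ lam : ℂ, lam ∈ spectrum ℂ (1 - T) ↔ (1 : ℂ) - lam ∈ spectrum ℂ T := by
    intro lam
    have h := spectrum.singleton_sub_eq T (1 : ℂ)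
    rw [map_one] at h
    rw [← h]
    constructor
    · rintro hm
      rw [Set.mem_sub] at hm
      obtain ⟨x, hx, y, hy, hxy⟩ := hm
      rw [Set.mem_singleton_iff] at hx
      subst hx
      have : (1 : ℂ) - lam = y := by linear_combination hxy
      rwa [this]
    · intro hm
      rw [Set.mem_sub]
      exact ⟨1, rfl, 1 - lam, hm, by ring⟩
  -- key step
  have key : ∀ lam : ℂ, lam ∈ spectrum ℂ (1 - T) → lam ≠ 1 →
      lam / (q : ℂ) ^ 2 ∈ spectrum ℂ (1 - T) := by
    intro lam hmem hne
    have h1 : (1 : ℂ) - lam ∈ spectrum ℂ T := (hmemT lam).mp hmem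
    have hne0 : (1 : ℂ) - lam ≠ 0 := sub_ne_zero.mpr (Ne.symm hne)
    -- transfer to σ(A* A)
    have h2 : (1 : ℂ) - lam ∈ spectrum ℂ ((ContinuousLinearMap.adjoint A) ∘L A) := by
      have := spectrum.unit_mem_mul_comm
        (a := A) (b := ContinuousLinearMap.adjoint A) (r := Units.mk0 _ hne0)
      exact this.mp h1
    rw [hA] at h2
    -- peel off the scalar part
    have h3 : ((q : ℂ) ^ 2) - lam ∈ spectrum ℂ (((q : ℂ) ^ 2) • T) := by
      have h := spectrum.singleton_add_eq (((q : ℂ) ^ 2) • T)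
        ((1 : ℂ) - (q : ℂ) ^ 2)
      have hop : ((q : ℂ) ^ 2 • T + ((1 : ℂ) - (q : ℂ) ^ 2) • 1 : H →L[ℂ] H) =
          (algebraMap ℂ (H →L[ℂ] H)) ((1 : ℂ) - (q : ℂ) ^ 2) + (q : ℂ) ^ 2 • T := by
        rw [Algebra.algebraMap_eq_smul_one]
        abel
      rw [hop, ← h] at h2
      rw [Set.mem_add] at h2
      obtain ⟨x, hx, y, hy, hxy⟩ := h2
      rw [Set.mem_singleton_iff] at hx
      subst hx
      have : ((q : ℂ) ^ 2) - lam = y := by linear_combination -hxy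
      rwa [this]
    -- unscale
    have h4 : ((q : ℂ) ^ 2 - lam) / (q : ℂ) ^ 2 ∈ spectrum ℂ T := by
      have hu := spectrum.unit_smul_eq_smul T (Units.mk0 _ hq2)
      have : (((q : ℂ) ^ 2) • T) = (Units.mk0 _ hq2 : ℂˣ) • T := rfl
      rw [this, hu] at h3
      rw [Set.mem_smul_set_iff_inv_smul_mem] at h3
      convert h3 using 1
      simp [Units.smul_def, div_eq_inv_mul]
    have h5 : (1 : ℂ) - lam / (q : ℂ) ^ 2 ∈ spectrum ℂ T := by
      have : (1 : ℂ) - lam / (q : ℂ) ^ 2 = ((q : ℂ) ^ 2 - lam) / (q : ℂ) ^ 2 := by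
        rw [eq_div_iff hq2, sub_mul, div_mul_cancel₀ _ hq2, one_mul]
      rwa [this]
    exact (hmemT _).mpr h5
  -- main argument
  intro lam hlam
  by_contra hcon
  simp only [Set.mem_insert_iff, Set.mem_range, not_or, not_exists] at hcon
  obtain ⟨hne0, hrange⟩ := hcon
  have hiter : ∀ n : ℕ, lam / (q : ℂ) ^ (2 * n) ∈ spectrum ℂ (1 - T) := by
    intro n
    induction n with
    | zero => simpa using hlam
    | succ n ih =>
      have hne1 : lam / (q : ℂ) ^ (2 * n) ≠ 1 := by
        intro h
        apply hrange n
        have hpow : ((q : ℂ)) ^ (2 * n) ≠ 0 :=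
          pow_ne_zero _ (Complex.ofReal_ne_zero.mpr hq0.ne')
        rw [div_eq_one_iff_eq hpow] at h
        exact h.symm
      have := key _ ih hne1
      have heq : lam / (q : ℂ) ^ (2 * n) / (q : ℂ) ^ 2 = lam / (q : ℂ) ^ (2 * (n + 1)) := by
        rw [div_div, ← pow_add]
        ring_nf
      rwa [heq] at this
  -- norm bound contradiction
  have hq2r : (0 : ℝ) < q ^ 2 := by positivity
  have hq2lt : q ^ 2 < 1 := by nlinarith
  have hlampos : (0 : ℝ) < ‖lam‖ := norm_pos_iff.mpr hne0
  have hNpos : (0 : ℝ) < ‖(1 - T : H →L[ℂ] H)‖ + 1 := by positivity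
  obtain ⟨n, hn⟩ := exists_pow_lt_of_lt_one (div_pos hlampos hNpos) hq2lt
  have hb := spectrum.norm_le_norm_of_mem (hiter n)
  have hnorm : ‖lam / (q : ℂ) ^ (2 * n)‖ = ‖lam‖ / (q ^ 2) ^ n := by
    rw [norm_div, norm_pow]
    rw [Complex.norm_real, Real.norm_eq_abs, abs_of_pos hq0, ← pow_mul, mul_comm 2 n, pow_mul]
  rw [hnorm] at hb
  have hqn : (0 : ℝ) < (q ^ 2) ^ n := by positivity
  rw [div_le_iff₀ hqn] at hb
  have : ‖lam‖ < ‖lam‖ := by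
    calc ‖lam‖ ≤ ‖(1 - T : H →L[ℂ] H)‖ * (q ^ 2) ^ n := hb
      _ ≤ (‖(1 - T : H →L[ℂ] H)‖ + 1) * (q ^ 2) ^ n := by nlinarith
      _ < (‖(1 - T : H →L[ℂ] H)‖ + 1) * (‖lam‖ / (‖(1 - T : H →L[ℂ] H)‖ + 1)) := by
          exact mul_lt_mul_of_pos_left hn hNpos
      _ = ‖lam‖ := by field_simp
  exact absurd this (lt_irrefl _)
end
end

section
/- Let H be a nonzero complex Hilbert space and A a bounded linear operator on H satisfying A*A = q² A A* + (1 − q²)·I. Assume A A* ≠ I and that the only closed subspaces of H invariant under both A and A* are {0} and H. Then there is a unitary operator U : ℓ²(ℕ, ℂ) → H such that A U = U T, i.e. the representation determined by A is unitarily equivalent to the Fock representation. -/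
noncomputable section

open ContinuousLinearMap

private lemma aux_spectral {H : Type} [NormedAddCommGroup H] [InnerProductSpace ℂ H] [CompleteSpace H]
    [Nontrivial H] (q : ℝ) (hq0 : 0 < q) (hq1 : q < 1) (A : H →L[ℂ] H)
    (X : H →L[ℂ] H) (hXsa : IsSelfAdjoint X) (hXne : X ≠ 0)
    (hcomm : X * A = ((q:ℂ)^2) • (A * X))
    (hker : A.ker = ⊥) (hrange : A.range = ⊤) : False := by
  set E := ContinuousLinearEquiv.ofBijective A hker hrange with hE
  set B : H →L[ℂ] H := (E.symm : H →L[ℂ] H) with hB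
  have hAB : A * B = 1 := by
    ext x
    show A (E.symm x) = x
    have : A (E.symm x) = E (E.symm x) := rfl
    rw [this, E.apply_symm_apply]
  have hBA : B * A = 1 := by
    ext x
    show E.symm (A x) = x
    have : A x = E x := rfl
    rw [this, E.symm_apply_apply]
  have hXeq : X = ((q:ℂ)^2) • (A * (X * B)) := by
    calc X = (X * A) * B := by rw [mul_assoc, hAB, mul_one]
    _ = ((q:ℂ)^2) • (A * (X * B)) := by rw [hcomm]; simp [smul_mul_assoc, mul_assoc]
  -- spectrum bound
  have hspec : ∀ μ : ℂ, μ ∈ spectrum ℂ X → ‖μ‖₊ ≤ (q^2).toNNReal * ‖X‖₊ := by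
    intro μ hμ
    rcases eq_or_ne μ 0 with rfl | hμ0
    · simp
    · have hq2 : ((q:ℂ)^2) ≠ 0 := pow_ne_zero 2 (Complex.ofReal_ne_zero.mpr hq0.ne')
      set u : ℂˣ := Units.mk0 _ hq2 with hu
      have husmul : (u • (A * (X * B)) : H →L[ℂ] H) = ((q:ℂ)^2) • (A * (X * B)) := by
        simp [hu, Units.smul_def]
      have h1 : μ ∈ spectrum ℂ ((u : ℂˣ) • (A * (X * B))) := by
        rw [husmul, ← hXeq]; exact hμ
      rw [spectrum.unit_smul_eq_smul] at h1
      obtain ⟨ν, hν, hμν⟩ := h1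
      have hν0 : ν ≠ 0 := by
        intro h; rw [h] at hμν; simp at hμν; exact hμ0 hμν.symm
      have h2 : ν ∈ spectrum ℂ (A * (X * B)) \ {0} := ⟨hν, hν0⟩
      rw [spectrum.nonzero_mul_comm] at h2
      have h3 : (X * B) * A = X := by rw [mul_assoc, hBA, mul_one]
      rw [h3] at h2
      have hb : ‖ν‖ ≤ ‖X‖ := spectrum.norm_le_norm_of_mem h2.1
      rw [← hμν]
      have : ‖(u : ℂ) • ν‖ = q^2 * ‖ν‖ := by
        simp [hu, norm_smul]
      calc ‖(u:ℂ) • ν‖₊ ≤ ‖(u:ℂ)‖₊ * ‖X‖₊ := by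
            rw [nnnorm_smul]
            exact mul_le_mul_right (by exact_mod_cast hb) _
      _ = (q^2).toNNReal * ‖X‖₊ := by
            congr 1
            ext
            rw [coe_nnnorm, Real.coe_toNNReal _ (sq_nonneg q)]
            simp [hu, abs_of_pos hq0]
  -- spectral radius
  have hsr : spectralRadius ℂ X = (‖X‖₊ : ENNReal) := hXsa.spectralRadius_eq_nnnorm
  have hle : (‖X‖₊ : ENNReal) ≤ ((q^2).toNNReal * ‖X‖₊ : NNReal) := by
    rw [← hsr, spectralRadius]
    refine iSup₂_le fun μ hμ => ?_
    exact_mod_cast hspec μ hμ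
  have hle' : ‖X‖₊ ≤ (q^2).toNNReal * ‖X‖₊ := by exact_mod_cast hle
  have hq2lt : (q^2).toNNReal < 1 := by
    rw [← NNReal.coe_lt_coe, Real.coe_toNNReal _ (sq_nonneg q), NNReal.coe_one]
    nlinarith
  have : ‖X‖₊ = 0 := by
    by_contra h
    have h0 : 0 < ‖X‖₊ := pos_iff_ne_zero.mpr h
    have := mul_lt_mul_of_pos_right hq2lt h0
    rw [one_mul] at this
    exact absurd hle' (not_le.mpr this)
  exact hXne (by simpa using this)

private lemma aux_vacuum {H : Type} [NormedAddCommGroup H] [InnerProductSpace ℂ H] [CompleteSpace H]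
    [Nontrivial H] (q : ℝ) (hq0 : 0 < q) (hq1 : q < 1) (A : H →L[ℂ] H)
    (hlow : ∀ v : H, Real.sqrt (1 - q^2) * ‖v‖ ≤ ‖A v‖)
    (hcontra : A.ker = ⊥ → A.range = ⊤ → False) :
    ∃ v : H, ‖v‖ = 1 ∧ ContinuousLinearMap.adjoint A v = 0 := by
  have hs : (0:ℝ) < Real.sqrt (1 - q^2) := Real.sqrt_pos.mpr (by nlinarith)
  have hker : A.ker = ⊥ := by
    rw [LinearMap.ker_eq_bot']
    intro v hv
    change A v = 0 at hv
    have := hlow v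
    rw [hv, norm_zero] at this
    have : ‖v‖ ≤ 0 := by
      by_contra h
      push_neg at h
      nlinarith
    simpa [le_antisymm this (norm_nonneg v)] using norm_eq_zero.mp (le_antisymm this (norm_nonneg v))
  have hanti : AntilipschitzWith (Real.sqrt (1 - q^2))⁻¹.toNNReal ⇑A := by
    apply ContinuousLinearMap.antilipschitz_of_bound
    intro x
    rw [Real.coe_toNNReal _ (by positivity)]
    rw [le_inv_mul_iff₀ hs]
    exact hlow x
  have hclosed : IsClosed (A.range : Set H) := by
    have := hanti.isClosed_range A.uniformContinuous
    exact this
  set K := A.range with hK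
  haveI : CompleteSpace K := hclosed.completeSpace_coe
  rcases eq_or_ne Kᗮ ⊥ with hbot | hne
  · exact absurd (Submodule.orthogonal_eq_bot_iff.mp hbot) (fun h => (hcontra hker h).elim)
  · obtain ⟨v, hvK, hv0⟩ := Submodule.exists_mem_ne_zero_of_ne_bot hne
    have hAdv : ContinuousLinearMap.adjoint A v = 0 := by
      have h2 : (inner ℂ (A (ContinuousLinearMap.adjoint A v)) v : ℂ) = 0 := by
        have : A (ContinuousLinearMap.adjoint A v) ∈ K := LinearMap.mem_range_self _ _
        exact (Submodule.mem_orthogonal K v).mp hvK _ this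
      have h1 : (inner ℂ (ContinuousLinearMap.adjoint A v) (ContinuousLinearMap.adjoint A v) : ℂ)
          = inner ℂ v (A (ContinuousLinearMap.adjoint A v)) := by
        rw [adjoint_inner_left]
      have h3 : (inner ℂ v (A (ContinuousLinearMap.adjoint A v)) : ℂ) = 0 := by
        rw [← inner_conj_symm, h2, map_zero]
      rw [h3] at h1
      exact inner_self_eq_zero.mp h1
    refine ⟨((‖v‖:ℂ))⁻¹ • v, ?_, ?_⟩
    · rw [norm_smul]
      simp [norm_ne_zero_iff.mpr hv0, Complex.norm_real]
    · rw [map_smul, hAdv, smul_zero]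

set_option maxHeartbeats 1000000 in
private lemma aux_main (q : ℝ) (hq0 : 0 < q) (hq1 : q < 1)
    (T : lp (fun _ : ℕ => ℂ) 2 →L[ℂ] lp (fun _ : ℕ => ℂ) 2)
    (hT : ∀ n : ℕ, T (fockBasis n) =
      (Real.sqrt (1 - q ^ (2 * (n + 1))) : ℂ) • fockBasis (n + 1))
    {H : Type} [NormedAddCommGroup H] [InnerProductSpace ℂ H] [CompleteSpace H]
    [Nontrivial H]
    (A : H →L[ℂ] H)
    (X : H →L[ℂ] H) (hX : X = 1 - A * (ContinuousLinearMap.adjoint A))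
    (hXsa : IsSelfAdjoint X)
    (h1 : (ContinuousLinearMap.adjoint A) * A = 1 - ((q:ℂ)^2) • X)
    (hcomm : X * A = ((q:ℂ)^2) • (A * X))
    (hAv : ∀ v : H, ‖A v‖^2 = q^2 * ‖ContinuousLinearMap.adjoint A v‖^2 + (1 - q^2) * ‖v‖^2)
    (v : H) (hv1 : ‖v‖ = 1) (hv0 : ContinuousLinearMap.adjoint A v = 0)
    (hirr : ∀ M : Submodule ℂ H, IsClosed (M : Set H) →
      (∀ x ∈ M, A x ∈ M) → (∀ x ∈ M, (ContinuousLinearMap.adjoint A) x ∈ M) →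
      M = ⊥ ∨ M = ⊤) :
    ∃ U : lp (fun _ : ℕ => ℂ) 2 ≃ₗᵢ[ℂ] H, ∀ w, A (U w) = U (T w) := by
  set Ad := ContinuousLinearMap.adjoint A with hAd
  -- the normalization constants
  set sq : ℕ → ℝ := fun n => Real.sqrt (1 - q ^ (2 * (n + 1))) with hsq
  have hpow : ∀ n : ℕ, 0 < 1 - q ^ (2 * (n + 1)) := by
    intro n
    have : q ^ (2 * (n + 1)) < 1 := pow_lt_one₀ hq0.le hq1 (by omega)
    linarith
  have hsqpos : ∀ n, 0 < sq n := fun n => Real.sqrt_pos.mpr (hpow n)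
  have hsqsq : ∀ n, (sq n)^2 = 1 - q ^ (2 * (n + 1)) := fun n => Real.sq_sqrt (hpow n).le
  -- the sequence
  set e : ℕ → H := fun n => Nat.rec v (fun n w => (((sq n)⁻¹ : ℝ) : ℂ) • A w) n with he
  have he0 : e 0 = v := rfl
  have heS : ∀ n, e (n + 1) = (((sq n)⁻¹ : ℝ) : ℂ) • A (e n) := fun n => rfl
  -- main induction
  have main : ∀ n : ℕ, X (e n) = ((q ^ (2 * n) : ℝ) : ℂ) • e n ∧ ‖e n‖ = 1 := by
    intro n
    induction n with
    | zero =>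
      constructor
      · have : X v = v - A (Ad v) := by
          rw [hX]; simp [sub_apply, mul_apply']
        rw [he0, this, hv0, map_zero, sub_zero]
        simp
      · simpa [he0] using hv1
    | succ n ih =>
      obtain ⟨hXe, hnorm⟩ := ih
      have hAde : (inner ℂ (Ad (e n)) (Ad (e n)) : ℂ) = ((1 - q ^ (2 * n) : ℝ) : ℂ) := by
        have h2 : (inner ℂ (Ad (e n)) (Ad (e n)) : ℂ) = inner ℂ (e n) (A (Ad (e n))) := by
          rw [hAd, adjoint_inner_left]
        have h3 : A (Ad (e n)) = e n - X (e n) := by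
          rw [hX]; simp [sub_apply, mul_apply']
        rw [h2, h3, inner_sub_right, hXe, inner_smul_right, inner_self_eq_norm_sq_to_K, hnorm]
        push_cast
        ring
      have hAdnorm : ‖Ad (e n)‖^2 = 1 - q ^ (2 * n) := by
        have h4 := hAde
        rw [inner_self_eq_norm_sq_to_K] at h4
        have h5 : ((‖Ad (e n)‖^2 : ℝ) : ℂ) = ((1 - q^(2*n) : ℝ) : ℂ) := by
          push_cast
          push_cast at h4
          exact h4
        exact Complex.ofReal_injective h5
      have hAnorm : ‖A (e n)‖^2 = 1 - q ^ (2 * (n + 1)) := by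
        rw [hAv, hAdnorm, hnorm]
        ring_nf
      have hAnorm' : ‖A (e n)‖ = sq n := by
        have h5 : sq n = Real.sqrt (1 - q ^ (2 * (n + 1))) := rfl
        rw [h5, ← hAnorm, Real.sqrt_sq (norm_nonneg _)]
      constructor
      · rw [heS n, map_smul]
        have hXA : X (A (e n)) = ((q:ℂ)^2) • A (X (e n)) := by
          have h6 := congrArg (fun B : H →L[ℂ] H => B (e n)) hcomm
          simpa [mul_apply'] using h6
        rw [hXA, hXe, map_smul]
        simp only [smul_smul]
        congr 1
        push_cast
        ring
      · rw [heS n, norm_smul, hAnorm']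
        simp [abs_of_pos (hsqpos n), inv_mul_cancel₀ (hsqpos n).ne']
  -- actions on e
  have hAe : ∀ n, A (e n) = ((sq n : ℝ) : ℂ) • e (n + 1) := by
    intro n
    rw [heS n, smul_smul]
    have h7 : ((sq n : ℝ) : ℂ) * (((sq n)⁻¹ : ℝ) : ℂ) = 1 := by
      push_cast
      rw [mul_inv_cancel₀]
      exact_mod_cast (hsqpos n).ne'
    rw [h7, one_smul]
  have hAde0 : Ad (e 0) = 0 := by rw [he0]; exact hv0
  have hAdeS : ∀ n, Ad (e (n + 1)) = ((sq n : ℝ) : ℂ) • e n := by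
    intro n
    rw [heS n, map_smul]
    have h2 : Ad (A (e n)) = e n - ((q:ℂ)^2) • X (e n) := by
      have h8 := congrArg (fun B : H →L[ℂ] H => B (e n)) h1
      simpa [mul_apply'] using h8
    rw [h2, (main n).1, smul_sub]
    simp only [smul_smul]
    rw [← sub_smul]
    congr 1
    have hsn : ((sq n : ℝ) : ℂ) ≠ 0 := Complex.ofReal_ne_zero.mpr (hsqpos n).ne'
    have hs2c : ((sq n : ℝ) : ℂ) * ((sq n : ℝ) : ℂ) = 1 - (q:ℂ)^2 * (q:ℂ)^(2*n) := by
      norm_cast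
      rw [← pow_two, hsqsq n]
      ring
    push_cast
    field_simp
    linear_combination -hs2c
  -- orthonormality
  have horth : Orthonormal ℂ e := by
    rw [orthonormal_iff_ite]
    have hsymm : ∀ i j, (inner ℂ (X (e i)) (e j) : ℂ) = inner ℂ (e i) (X (e j)) := by
      intro i j
      conv_lhs => rw [← hXsa.adjoint_eq]
      rw [adjoint_inner_left]
    intro i j
    rcases eq_or_ne i j with rfl | hij
    · simp only [if_pos rfl]
      rw [inner_self_eq_norm_sq_to_K, (main i).2]
      norm_num
    · rw [if_neg hij]
      have h2 := hsymm i j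
      rw [(main i).1, (main j).1, inner_smul_left, inner_smul_right, Complex.conj_ofReal] at h2
      have hne : ((q ^ (2*i) : ℝ) : ℂ) ≠ ((q ^ (2*j) : ℝ) : ℂ) := by
        rw [Ne, Complex.ofReal_inj]
        rcases lt_or_gt_of_ne hij with h | h
        · exact (pow_lt_pow_right_of_lt_one₀ hq0 hq1 (by omega : 2*i < 2*j)).ne'
        · exact (pow_lt_pow_right_of_lt_one₀ hq0 hq1 (by omega : 2*j < 2*i)).ne
      have h9 : (((q ^ (2*i) : ℝ) : ℂ) - ((q ^ (2*j) : ℝ) : ℂ)) * (inner ℂ (e i) (e j) : ℂ) = 0 := by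
        linear_combination h2
      rcases mul_eq_zero.mp h9 with h | h
      · exact absurd (sub_eq_zero.mp h) hne
      · exact h
  -- totality
  set S : Submodule ℂ H := Submodule.span ℂ (Set.range e) with hS
  have hsubS : ∀ n, e n ∈ S := fun n => Submodule.subset_span ⟨n, rfl⟩
  have hSA : ∀ x ∈ S, A x ∈ S := by
    intro x hx
    have : S ≤ S.comap (A : H →ₗ[ℂ] H) := by
      rw [hS, Submodule.span_le]
      rintro _ ⟨n, rfl⟩
      simp only [SetLike.mem_coe, Submodule.mem_comap, ContinuousLinearMap.coe_coe]
      rw [hAe n]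
      exact Submodule.smul_mem _ _ (hsubS (n+1))
    exact this hx
  have hSAd : ∀ x ∈ S, Ad x ∈ S := by
    intro x hx
    have : S ≤ S.comap (Ad : H →ₗ[ℂ] H) := by
      rw [hS, Submodule.span_le]
      rintro _ ⟨n, rfl⟩
      simp only [SetLike.mem_coe, Submodule.mem_comap, ContinuousLinearMap.coe_coe]
      cases n with
      | zero => rw [hAde0]; exact Submodule.zero_mem _
      | succ n => rw [hAdeS n]; exact Submodule.smul_mem _ _ (hsubS n)
    exact this hx
  set M := S.topologicalClosure with hM
  have hMcoe : (M : Set H) = closure (S : Set H) := S.topologicalClosure_coe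
  have hinv : ∀ (B : H →L[ℂ] H), (∀ x ∈ S, B x ∈ S) → ∀ x ∈ M, B x ∈ M := by
    intro B hB x hx
    have hx' : x ∈ closure (S : Set H) := by rwa [← SetLike.mem_coe, hMcoe] at hx
    have h1 : B x ∈ ⇑B '' closure (S : Set H) := ⟨x, hx', rfl⟩
    have h2 : ⇑B '' closure (S : Set H) ⊆ closure (⇑B '' (S : Set H)) :=
      image_closure_subset_closure_image B.continuous
    have h3 : ⇑B '' (S : Set H) ⊆ (S : Set H) := by
      rintro _ ⟨y, hy, rfl⟩
      exact hB y hy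
    have h4 : B x ∈ closure (S : Set H) := closure_mono h3 (h2 h1)
    rwa [← SetLike.mem_coe, hMcoe]
  have hvM : v ∈ M := by
    rw [← he0]
    exact S.le_topologicalClosure (hsubS 0)
  have hMtop : M = ⊤ := by
    rcases hirr M S.isClosed_topologicalClosure (hinv A hSA) (hinv Ad hSAd) with h | h
    · exfalso
      rw [h] at hvM
      have : v = 0 := hvM
      rw [this, norm_zero] at hv1
      norm_num at hv1
    · exact h
  -- the Hilbert basis
  have hsp : ⊤ ≤ S.topologicalClosure := hMtop.ge
  set b : HilbertBasis ℕ ℂ H := HilbertBasis.mk horth hsp with hb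
  have hbe : ⇑b = e := HilbertBasis.coe_mk horth hsp
  set U := b.repr.symm with hU
  have hUe : ∀ n, U (fockBasis n) = e n := by
    intro n
    have h5 : U (fockBasis n) = b n := b.repr_symm_single n
    rw [h5, hbe]
  -- density of the fock basis span
  have hdense : Dense (↑(Submodule.span ℂ (Set.range fockBasis)) : Set (lp (fun _ : ℕ => ℂ) 2)) := by
    rw [Submodule.dense_iff_topologicalClosure_eq_top, Submodule.topologicalClosure_eq_top_iff,
      Submodule.eq_bot_iff]
    intro f hf
    have hf' : ∀ n : ℕ, (inner ℂ (fockBasis n) f : ℂ) = 0 := fun n =>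
      (Submodule.mem_orthogonal _ f).mp hf (fockBasis n) (Submodule.subset_span ⟨n, rfl⟩)
    apply lp.ext
    funext n
    have h6 := hf' n
    rw [show fockBasis n = lp.single 2 n 1 from rfl, lp.inner_single_left] at h6
    simpa using h6
  -- the continuous linear map version of U
  set Ucl : lp (fun _ : ℕ => ℂ) 2 →L[ℂ] H := U.toLinearIsometry.toContinuousLinearMap with hUcl
  have hUclapp : ∀ w, Ucl w = U w := fun w => rfl
  have hfin : A.comp Ucl = Ucl.comp T := by
    apply ContinuousLinearMap.ext_on hdense
    rintro _ ⟨n, rfl⟩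
    simp only [comp_apply]
    rw [hUclapp, hUe n, hT n, map_smul, hUclapp, hUe (n+1), hAe n]
  refine ⟨U, fun w => ?_⟩
  have h7 := ContinuousLinearMap.ext_iff.mp hfin w
  simp only [comp_apply] at h7
  rw [hUclapp, hUclapp] at h7
  exact h7


/-- Any irreducible bounded `*`-representation of the quantum disc relation with
`A A* ≠ I` is unitarily equivalent to the Fock representation. -/
theorem quantum_disc_fock_uniqueness (q : ℝ) (hq0 : 0 < q) (hq1 : q < 1)
    (T : lp (fun _ : ℕ => ℂ) 2 →L[ℂ] lp (fun _ : ℕ => ℂ) 2)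
    (hT : ∀ n : ℕ, T (fockBasis n) =
      (Real.sqrt (1 - q ^ (2 * (n + 1))) : ℂ) • fockBasis (n + 1))
    {H : Type} [NormedAddCommGroup H] [InnerProductSpace ℂ H] [CompleteSpace H]
    [Nontrivial H]
    (A : H →L[ℂ] H)
    (hA : (ContinuousLinearMap.adjoint A) ∘L A =
      ((q : ℂ) ^ 2) • (A ∘L ContinuousLinearMap.adjoint A) +
        ((1 : ℂ) - (q : ℂ) ^ 2) • (1 : H →L[ℂ] H))
    (hAA : A ∘L ContinuousLinearMap.adjoint A ≠ 1)
    (hirr : ∀ M : Submodule ℂ H, IsClosed (M : Set H) →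
      (∀ x ∈ M, A x ∈ M) → (∀ x ∈ M, (ContinuousLinearMap.adjoint A) x ∈ M) →
      M = ⊥ ∨ M = ⊤) :
    ∃ U : lp (fun _ : ℕ => ℂ) 2 ≃ₗᵢ[ℂ] H, ∀ v, A (U v) = U (T v) := by
  set Ad := ContinuousLinearMap.adjoint A with hAd
  set X : H →L[ℂ] H := 1 - A * Ad with hX
  have hmul : ∀ B C : H →L[ℂ] H, B * C = B ∘L C := fun _ _ => rfl
  have h1 : Ad * A = 1 - ((q:ℂ)^2) • X := by
    rw [hX]; rw [hmul, hA]; module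
  have hXsa : IsSelfAdjoint X := by
    rw [hX]
    have : IsSelfAdjoint (A * Ad) := by
      rw [IsSelfAdjoint, star_eq_adjoint, hmul, adjoint_comp, hAd, adjoint_adjoint]
    exact (IsSelfAdjoint.one (R := H →L[ℂ] H)).sub this
  have hcomm : X * A = ((q:ℂ)^2) • (A * X) := by
    have : X * A = A - A * (Ad * A) := by rw [hX]; noncomm_ring
    rw [this, h1]
    simp [mul_sub, smul_sub, mul_smul_comm]
  have hXne : X ≠ 0 := by
    intro h
    apply hAA
    rw [hX, sub_eq_zero] at h
    exact h.symm
  -- pointwise norm identity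
  have key : ∀ v : H, ((‖A v‖:ℂ))^2 = (q:ℂ)^2 * (‖Ad v‖:ℂ)^2 + (1 - (q:ℂ)^2) * (‖v‖:ℂ)^2 := by
    intro v
    have h1' : (inner ℂ (A v) (A v) : ℂ) = inner ℂ v ((Ad ∘L A) v) := by
      rw [comp_apply, hAd, adjoint_inner_right]
    rw [hAd] at h1'
    rw [hA] at h1'
    simp only [add_apply, smul_apply, one_apply, inner_add_right, inner_smul_right,
      comp_apply] at h1'
    have h2 : (inner ℂ v (A (ContinuousLinearMap.adjoint A v)) : ℂ)
        = inner ℂ (ContinuousLinearMap.adjoint A v) (ContinuousLinearMap.adjoint A v) := by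
      rw [← adjoint_inner_left]
    rw [h2] at h1'
    rw [← hAd] at h1'
    simpa [inner_self_eq_norm_sq_to_K] using h1'
  have hAv : ∀ v : H, ‖A v‖^2 = q^2 * ‖Ad v‖^2 + (1 - q^2) * ‖v‖^2 := by
    intro v
    have := key v
    push_cast at this
    exact_mod_cast this
  have hlow : ∀ v : H, Real.sqrt (1 - q^2) * ‖v‖ ≤ ‖A v‖ := by
    intro v
    have h1' : (Real.sqrt (1 - q^2) * ‖v‖)^2 ≤ ‖A v‖^2 := by
      rw [mul_pow, Real.sq_sqrt (by nlinarith : (0:ℝ) ≤ 1 - q^2), hAv v]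
      nlinarith [norm_nonneg (Ad v), sq_nonneg (‖Ad v‖)]
    have := Real.sqrt_le_sqrt h1'
    rwa [Real.sqrt_sq (by positivity), Real.sqrt_sq (norm_nonneg _)] at this
  -- a vacuum vector exists
  obtain ⟨v, hv1, hv0⟩ := aux_vacuum q hq0 hq1 A hlow
    (fun hker hrange => aux_spectral q hq0 hq1 A X hXsa hXne hcomm hker hrange)
  -- conclude
  exact aux_main q hq0 hq1 T hT A X hX hXsa h1 hcomm hAv v hv1 hv0 hirr

end
end

section
/- There exists a unique conjugate-linear, involutive antiautomorphism * of the ℂ-algebra ℂ[SL₂]_q satisfying t₁₁* = −t₂₂, t₁₂* = −q t₂₁, t₂₁* = −q^{−1} t₁₂, t₂₂* = −t₁₁; i.e. these formulas on the generators extend to a star-algebra structure on ℂ[SL₂]_q (the algebra ℂ[w₀SU₁,₁]_q of regular functions on the quantum principal homogeneous space w₀SU₁,₁). -/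
noncomputable section

namespace QuantumSL2

/-- The free algebra on the four generators `t₁₁, t₁₂, t₂₁, t₂₂` (indexed by `Fin 4`). -/
abbrev F4 := FreeAlgebra ℂ (Fin 4)

/-- The free generator corresponding to `t₁₁`. -/
def a : F4 := FreeAlgebra.ι ℂ 0
/-- The free generator corresponding to `t₁₂`. -/
def b : F4 := FreeAlgebra.ι ℂ 1
/-- The free generator corresponding to `t₂₁`. -/
def c : F4 := FreeAlgebra.ι ℂ 2
/-- The free generator corresponding to `t₂₂`. -/
def d : F4 := FreeAlgebra.ι ℂ 3

/-- The defining relations of the quantum group algebra `ℂ[SL₂]_q`. -/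
inductive SLRel (q : ℝ) : F4 → F4 → Prop
  | r1 : SLRel q (a * b) ((q : ℂ) • (b * a))
  | r2 : SLRel q (a * c) ((q : ℂ) • (c * a))
  | r3 : SLRel q (b * d) ((q : ℂ) • (d * b))
  | r4 : SLRel q (c * d) ((q : ℂ) • (d * c))
  | r5 : SLRel q (b * c) (c * b)
  | r6 : SLRel q (a * d - d * a) (((q : ℂ) - (q : ℂ)⁻¹) • (b * c))
  | r7 : SLRel q (a * d - (q : ℂ) • (b * c)) 1

/-- The quantum group algebra `ℂ[SL₂]_q`. -/
abbrev SL2q (q : ℝ) := RingQuot (SLRel q)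

/-- The generator `t₁₁` of `ℂ[SL₂]_q`. -/
def t11 (q : ℝ) : SL2q q := RingQuot.mkAlgHom ℂ (SLRel q) a
/-- The generator `t₁₂` of `ℂ[SL₂]_q`. -/
def t12 (q : ℝ) : SL2q q := RingQuot.mkAlgHom ℂ (SLRel q) b
/-- The generator `t₂₁` of `ℂ[SL₂]_q`. -/
def t21 (q : ℝ) : SL2q q := RingQuot.mkAlgHom ℂ (SLRel q) c
/-- The generator `t₂₂` of `ℂ[SL₂]_q`. -/
def t22 (q : ℝ) : SL2q q := RingQuot.mkAlgHom ℂ (SLRel q) d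

end QuantumSL2

open QuantumSL2

namespace QuantumSL2Star

open MulOpposite

section Generic

variable {A : Type} [Ring A] [Algebra ℂ A]

/-- The ring homomorphism `F4 →+* Aᵐᵒᵖ` sending the `i`-th generator to `op (f i)`
and a scalar `r` to the conjugate scalar; equivalently, a conjugate-linear
anti-homomorphism `F4 → A`. -/
def gRH0 (f : Fin 4 → A) : F4 →+* Aᵐᵒᵖ :=
  (MonoidAlgebra.liftNCRingHom ((algebraMap ℂ Aᵐᵒᵖ).comp (starRingEnd ℂ))
    (FreeMonoid.lift (fun i => op (f i)))
    (fun x y => by simpa using Algebra.commute_algebraMap_left (starRingEnd ℂ x) ((FreeMonoid.lift (fun i => op (f i))) y))).comp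
    (FreeAlgebra.equivMonoidAlgebraFreeMonoid : F4 ≃ₐ[ℂ] _).toAlgHom.toRingHom

theorem gRH0_ι (f : Fin 4 → A) (i : Fin 4) : gRH0 f (FreeAlgebra.ι ℂ i) = op (f i) := by
  simp [gRH0, FreeAlgebra.equivMonoidAlgebraFreeMonoid, MonoidAlgebra.liftNCRingHom,
    MonoidAlgebra.of_apply, MonoidAlgebra.liftNC_single]

theorem gRH0_algebraMap (f : Fin 4 → A) (r : ℂ) :
    gRH0 f (algebraMap ℂ F4 r) = algebraMap ℂ Aᵐᵒᵖ (starRingEnd ℂ r) := by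
  simp [gRH0, MonoidAlgebra.liftNCRingHom, MonoidAlgebra.coe_algebraMap,
    MonoidAlgebra.liftNC_single, MulOpposite.algebraMap_apply]

theorem gRH0_smul (f : Fin 4 → A) (r : ℂ) (x : F4) :
    gRH0 f (r • x) = (starRingEnd ℂ r) • gRH0 f x := by
  rw [Algebra.smul_def, map_mul, gRH0_algebraMap, ← Algebra.smul_def]

end Generic

theorem rcase1 (q : ℝ) {A : Type} [Ring A] [Algebra ℂ A] (u v : A)
    (h : u * v = (q : ℂ) • (v * u)) :
    ((-(q : ℂ)) • u) * (-v) = (q : ℂ) • ((-v) * ((-(q : ℂ)) • u)) := by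
  simp only [smul_mul_assoc, mul_smul_comm, neg_mul, mul_neg, neg_neg, smul_smul, neg_smul,
    smul_neg, h]

theorem rcase2 (q : ℝ) {A : Type} [Ring A] [Algebra ℂ A] (u v : A)
    (h : u * v = (q : ℂ) • (v * u)) :
    ((-(q : ℂ)⁻¹) • u) * (-v) = (q : ℂ) • ((-v) * ((-(q : ℂ)⁻¹) • u)) := by
  simp only [smul_mul_assoc, mul_smul_comm, neg_mul, mul_neg, neg_neg, smul_smul, neg_smul,
    smul_neg, h]
  module

theorem rcase3 (q : ℝ) {A : Type} [Ring A] [Algebra ℂ A] (u v : A)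
    (h : u * v = (q : ℂ) • (v * u)) :
    (-u) * ((-(q : ℂ)) • v) = (q : ℂ) • (((-(q : ℂ)) • v) * (-u)) := by
  simp only [smul_mul_assoc, mul_smul_comm, neg_mul, mul_neg, neg_neg, smul_smul, neg_smul,
    smul_neg, h]

theorem rcase4 (q : ℝ) {A : Type} [Ring A] [Algebra ℂ A] (u v : A)
    (h : u * v = (q : ℂ) • (v * u)) :
    (-u) * ((-(q : ℂ)⁻¹) • v) = (q : ℂ) • (((-(q : ℂ)⁻¹) • v) * (-u)) := by
  simp only [smul_mul_assoc, mul_smul_comm, neg_mul, mul_neg, neg_neg, smul_smul, neg_smul,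
    smul_neg, h]
  module

theorem rcase5 (q : ℝ) {A : Type} [Ring A] [Algebra ℂ A] (u v : A)
    (h : u * v = v * u) :
    ((-(q : ℂ)⁻¹) • u) * ((-(q : ℂ)) • v) = ((-(q : ℂ)) • v) * ((-(q : ℂ)⁻¹) • u) := by
  simp only [smul_mul_assoc, mul_smul_comm, neg_mul, mul_neg, neg_neg, smul_smul, neg_smul,
    smul_neg, h]
  module

theorem rcase6 (q : ℝ) {A : Type} [Ring A] [Algebra ℂ A] (T11 T12 T21 T22 : A)
    (hq : (q : ℂ) ≠ 0)
    (h : T11 * T22 - T22 * T11 = ((q : ℂ) - (q : ℂ)⁻¹) • (T12 * T21)) :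
    (-T11) * (-T22) - (-T22) * (-T11)
      = ((q : ℂ) - (q : ℂ)⁻¹) • (((-(q : ℂ)⁻¹) • T12) * ((-(q : ℂ)) • T21)) := by
  simp only [smul_mul_assoc, mul_smul_comm, neg_mul, mul_neg, neg_neg, smul_smul, neg_smul,
    smul_neg, h, inv_mul_cancel₀ hq]
  match_scalars <;> field_simp

theorem rcase7 (q : ℝ) {A : Type} [Ring A] [Algebra ℂ A] (T11 T12 T21 T22 : A)
    (hq : (q : ℂ) ≠ 0)
    (h : T11 * T22 - (q : ℂ) • (T12 * T21) = 1) :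
    (-T11) * (-T22) - (q : ℂ) • (((-(q : ℂ)⁻¹) • T12) * ((-(q : ℂ)) • T21)) = 1 := by
  simp only [smul_mul_assoc, mul_smul_comm, neg_mul, mul_neg, neg_neg, smul_smul, neg_smul,
    smul_neg, inv_mul_cancel₀ hq, one_smul]
  rw [show ((q : ℂ) * ((q : ℂ) * (q : ℂ)⁻¹)) = (q : ℂ) by field_simp]
  exact h

theorem smul_id {A : Type} [Ring A] [Algebra ℂ A] {r : ℂ} (h : r = 1) (u : A) :
    r • u = u := by rw [h, one_smul]

variable (q : ℝ)

theorem t11_def : RingQuot.mkAlgHom ℂ (SLRel q) a = t11 q := rfl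
theorem t12_def : RingQuot.mkAlgHom ℂ (SLRel q) b = t12 q := rfl
theorem t21_def : RingQuot.mkAlgHom ℂ (SLRel q) c = t21 q := rfl
theorem t22_def : RingQuot.mkAlgHom ℂ (SLRel q) d = t22 q := rfl

theorem relA1 : t11 q * t12 q = (q : ℂ) • (t12 q * t11 q) := by
  simpa only [map_mul, map_smul, t11_def, t12_def] using
    RingQuot.mkAlgHom_rel ℂ (SLRel.r1 (q := q))

theorem relA2 : t11 q * t21 q = (q : ℂ) • (t21 q * t11 q) := by
  simpa only [map_mul, map_smul, t11_def, t21_def] using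
    RingQuot.mkAlgHom_rel ℂ (SLRel.r2 (q := q))

theorem relA3 : t12 q * t22 q = (q : ℂ) • (t22 q * t12 q) := by
  simpa only [map_mul, map_smul, t12_def, t22_def] using
    RingQuot.mkAlgHom_rel ℂ (SLRel.r3 (q := q))

theorem relA4 : t21 q * t22 q = (q : ℂ) • (t22 q * t21 q) := by
  simpa only [map_mul, map_smul, t21_def, t22_def] using
    RingQuot.mkAlgHom_rel ℂ (SLRel.r4 (q := q))

theorem relA5 : t12 q * t21 q = t21 q * t12 q := by
  simpa only [map_mul, t12_def, t21_def] using
    RingQuot.mkAlgHom_rel ℂ (SLRel.r5 (q := q))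

theorem relA6 : t11 q * t22 q - t22 q * t11 q = ((q : ℂ) - (q : ℂ)⁻¹) • (t12 q * t21 q) := by
  simpa only [map_mul, map_smul, map_sub, t11_def, t12_def, t21_def, t22_def] using
    RingQuot.mkAlgHom_rel ℂ (SLRel.r6 (q := q))

theorem relA7 : t11 q * t22 q - (q : ℂ) • (t12 q * t21 q) = 1 := by
  simpa only [map_mul, map_smul, map_sub, map_one, t11_def, t12_def, t21_def, t22_def] using
    RingQuot.mkAlgHom_rel ℂ (SLRel.r7 (q := q))

/-- The images of the four generators under the star map. -/
def gens : Fin 4 → SL2q q := ![-(t22 q), (-(q : ℂ)) • t21 q, (-(q : ℂ)⁻¹) • t12 q, -(t11 q)]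

/-- The conjugate-linear anti-homomorphism out of the free algebra. -/
def gRH : F4 →+* (SL2q q)ᵐᵒᵖ := gRH0 (gens q)

theorem gRH_a : gRH q a = op (-(t22 q)) := by rw [gRH, a, gRH0_ι]; norm_num [gens]
theorem gRH_b : gRH q b = op ((-(q : ℂ)) • t21 q) := by rw [gRH, b, gRH0_ι]; norm_num [gens]
theorem gRH_c : gRH q c = op ((-(q : ℂ)⁻¹) • t12 q) := by rw [gRH, c, gRH0_ι]; norm_num [gens]; rfl
theorem gRH_d : gRH q d = op (-(t11 q)) := by rw [gRH, d, gRH0_ι]; norm_num [gens]; rfl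

theorem gRH_smul (r : ℂ) (x : F4) : gRH q (r • x) = (starRingEnd ℂ r) • gRH q x :=
  gRH0_smul _ r x

theorem gRH_algebraMap (r : ℂ) :
    gRH q (algebraMap ℂ F4 r) = algebraMap ℂ (SL2q q)ᵐᵒᵖ (starRingEnd ℂ r) :=
  gRH0_algebraMap _ r

theorem relcheck (hq : (q : ℂ) ≠ 0) : ∀ ⦃x y : F4⦄, SLRel q x y → gRH q x = gRH q y := by
  intro x y h
  induction h with
  | r1 =>
      rw [map_mul, gRH_smul, map_mul, gRH_a, gRH_b, Complex.conj_ofReal]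
      simp only [← op_mul, ← op_smul, op_inj]
      exact rcase1 q _ _ (relA4 q)
  | r2 =>
      rw [map_mul, gRH_smul, map_mul, gRH_a, gRH_c, Complex.conj_ofReal]
      simp only [← op_mul, ← op_smul, op_inj]
      exact rcase2 q _ _ (relA3 q)
  | r3 =>
      rw [map_mul, gRH_smul, map_mul, gRH_b, gRH_d, Complex.conj_ofReal]
      simp only [← op_mul, ← op_smul, op_inj]
      exact rcase3 q _ _ (relA2 q)
  | r4 =>
      rw [map_mul, gRH_smul, map_mul, gRH_c, gRH_d, Complex.conj_ofReal]
      simp only [← op_mul, ← op_smul, op_inj]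
      exact rcase4 q _ _ (relA1 q)
  | r5 =>
      rw [map_mul, map_mul, gRH_b, gRH_c]
      simp only [← op_mul, op_inj]
      exact rcase5 q _ _ (relA5 q)
  | r6 =>
      rw [map_sub, map_mul, map_mul, gRH_smul, map_mul, gRH_a, gRH_b, gRH_c, gRH_d]
      simp only [map_sub, Complex.conj_ofReal, map_inv₀]
      simp only [← op_mul, ← op_smul, ← op_sub, op_inj]
      exact rcase6 q _ _ _ _ hq (relA6 q)
  | r7 =>
      rw [map_sub, map_mul, gRH_smul, map_mul, map_one, gRH_a, gRH_b, gRH_c, gRH_d,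
        Complex.conj_ofReal]
      simp only [← op_mul, ← op_smul, ← op_sub, ← op_one, op_inj]
      exact rcase7 q _ _ _ _ hq (relA7 q)

variable (hq : (q : ℂ) ≠ 0)

/-- The star map on `ℂ[SL₂]_q`, descended to the quotient. -/
def sFun : SL2q q → SL2q q :=
  fun x => unop (RingQuot.lift ⟨gRH q, relcheck q hq⟩ x)

theorem sFun_mk (x : F4) :
    sFun q hq (RingQuot.mkAlgHom ℂ (SLRel q) x) = unop (gRH q x) := by
  have h : RingQuot.mkAlgHom ℂ (SLRel q) x = RingQuot.mkRingHom (SLRel q) x := by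
    rw [← RingQuot.mkAlgHom_coe ℂ (SLRel q)]; rfl
  rw [sFun, h, RingQuot.lift_mkRingHom_apply]

theorem sFun_add (x y : SL2q q) : sFun q hq (x + y) = sFun q hq x + sFun q hq y := by
  simp [sFun, map_add]

theorem sFun_mul (x y : SL2q q) : sFun q hq (x * y) = sFun q hq y * sFun q hq x := by
  simp [sFun, map_mul]

theorem sFun_algebraMap (r : ℂ) :
    sFun q hq (algebraMap ℂ (SL2q q) r) = algebraMap ℂ (SL2q q) (starRingEnd ℂ r) := by
  rw [← (RingQuot.mkAlgHom ℂ (SLRel q)).commutes r, sFun_mk, gRH_algebraMap,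
    MulOpposite.algebraMap_apply, unop_op]

theorem sFun_smul (r : ℂ) (x : SL2q q) :
    sFun q hq (r • x) = (starRingEnd ℂ r) • sFun q hq x := by
  rw [Algebra.smul_def, sFun_mul, sFun_algebraMap, ← Algebra.commutes, ← Algebra.smul_def]

theorem sFun_t11 : sFun q hq (t11 q) = -(t22 q) := by
  rw [t11, sFun_mk, gRH_a, unop_op]
theorem sFun_t12 : sFun q hq (t12 q) = (-(q : ℂ)) • t21 q := by
  rw [t12, sFun_mk, gRH_b, unop_op]
theorem sFun_t21 : sFun q hq (t21 q) = (-(q : ℂ)⁻¹) • t12 q := by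
  rw [t21, sFun_mk, gRH_c, unop_op]
theorem sFun_t22 : sFun q hq (t22 q) = -(t11 q) := by
  rw [t22, sFun_mk, gRH_d, unop_op]

theorem sFun_neg (x : SL2q q) : sFun q hq (-x) = -(sFun q hq x) := by
  simp [sFun, map_neg]

theorem sFun_invol_t11 : sFun q hq (sFun q hq (t11 q)) = t11 q := by
  rw [sFun_t11, sFun_neg, sFun_t22, neg_neg]
theorem sFun_invol_t12 : sFun q hq (sFun q hq (t12 q)) = t12 q := by
  rw [sFun_t12, sFun_smul, sFun_t21, smul_smul]
  exact smul_id (by rw [map_neg, Complex.conj_ofReal]; field_simp) _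
theorem sFun_invol_t21 : sFun q hq (sFun q hq (t21 q)) = t21 q := by
  rw [sFun_t21, sFun_smul, sFun_t12, smul_smul]
  exact smul_id (by rw [map_neg, map_inv₀, Complex.conj_ofReal]; field_simp) _
theorem sFun_invol_t22 : sFun q hq (sFun q hq (t22 q)) = t22 q := by
  rw [sFun_t22, sFun_neg, sFun_t11, neg_neg]

theorem sFun_invol (x : SL2q q) : sFun q hq (sFun q hq x) = x := by
  obtain ⟨u, rfl⟩ := RingQuot.mkAlgHom_surjective ℂ (SLRel q) x
  induction u using FreeAlgebra.induction with
  | grade0 r =>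
      rw [(RingQuot.mkAlgHom ℂ (SLRel q)).commutes r, sFun_algebraMap, sFun_algebraMap,
        Complex.conj_conj]
  | grade1 i =>
      fin_cases i
      · exact sFun_invol_t11 q hq
      · exact sFun_invol_t12 q hq
      · exact sFun_invol_t21 q hq
      · exact sFun_invol_t22 q hq
  | mul u v hu hv =>
      rw [map_mul, sFun_mul, sFun_mul, hu, hv]
  | add u v hu hv =>
      rw [map_add, sFun_add, sFun_add, hu, hv]

end QuantumSL2Star

open QuantumSL2Star

/-- There is a unique conjugate-linear involutive antiautomorphism `*` of `ℂ[SL₂]_q`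
with `t₁₁* = −t₂₂`, `t₁₂* = −q t₂₁`, `t₂₁* = −q⁻¹ t₁₂`, `t₂₂* = −t₁₁`. -/
theorem sl2q_star_structure (q : ℝ) (hq0 : 0 < q) (hq1 : q < 1) :
    ∃! s : SL2q q → SL2q q,
      (∀ x y, s (x + y) = s x + s y) ∧
      (∀ (r : ℂ) (x), s (r • x) = (starRingEnd ℂ r) • s x) ∧
      (∀ x y, s (x * y) = s y * s x) ∧
      (∀ x, s (s x) = x) ∧
      s (t11 q) = -(t22 q) ∧
      s (t12 q) = (-(q : ℂ)) • t21 q ∧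
      s (t21 q) = (-(q : ℂ)⁻¹) • t12 q ∧
      s (t22 q) = -(t11 q) := by
  have hq : (q : ℂ) ≠ 0 := by
    exact_mod_cast ne_of_gt hq0
  refine ⟨sFun q hq, ⟨sFun_add q hq, sFun_smul q hq, sFun_mul q hq, sFun_invol q hq,
    sFun_t11 q hq, sFun_t12 q hq, sFun_t21 q hq, sFun_t22 q hq⟩, ?_⟩
  rintro s' ⟨hadd, hsmul, hmul, _hinv, h11, h12, h21, h22⟩
  -- s' preserves negation and subtraction
  have hneg : ∀ x, s' (-x) = -(s' x) := by
    intro x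
    have h := hsmul (-1 : ℂ) x
    rw [map_neg, map_one, neg_one_smul ℂ (s' x), neg_one_smul ℂ x] at h
    exact h
  have hsub : ∀ x y, s' (x - y) = s' x - s' y := by
    intro x y
    rw [sub_eq_add_neg, hadd, hneg, sub_eq_add_neg]
  -- s' 1 = 1
  have hone : s' 1 = 1 := by
    have h1 := relA7 q
    calc s' 1 = s' (t11 q * t22 q - (q : ℂ) • (t12 q * t21 q)) := by rw [h1]
      _ = s' (t11 q * t22 q) - s' ((q : ℂ) • (t12 q * t21 q)) := hsub _ _
      _ = s' (t22 q) * s' (t11 q) - (q : ℂ) • (s' (t21 q) * s' (t12 q)) := by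
          rw [hmul, hsmul, hmul, Complex.conj_ofReal]
      _ = (-(t11 q)) * (-(t22 q))
            - (q : ℂ) • (((-(q : ℂ)⁻¹) • t12 q) * ((-(q : ℂ)) • t21 q)) := by
          rw [h11, h12, h21, h22]
      _ = 1 := rcase7 q _ _ _ _ hq (relA7 q)
  funext x
  obtain ⟨u, rfl⟩ := RingQuot.mkAlgHom_surjective ℂ (SLRel q) x
  induction u using FreeAlgebra.induction with
  | grade0 r =>
      rw [(RingQuot.mkAlgHom ℂ (SLRel q)).commutes r, sFun_algebraMap]
      calc s' (algebraMap ℂ (SL2q q) r) = s' (r • 1) := by rw [Algebra.algebraMap_eq_smul_one]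
        _ = (starRingEnd ℂ r) • (1 : SL2q q) := by rw [hsmul, hone]
        _ = algebraMap ℂ (SL2q q) (starRingEnd ℂ r) := by
            rw [Algebra.algebraMap_eq_smul_one]
  | grade1 i =>
      fin_cases i
      · exact h11.trans (sFun_t11 q hq).symm
      · exact h12.trans (sFun_t12 q hq).symm
      · exact h21.trans (sFun_t21 q hq).symm
      · exact h22.trans (sFun_t22 q hq).symm
  | mul u v hu hv =>
      rw [map_mul, hmul, sFun_mul q hq, hu, hv]
  | add u v hu hv =>
      rw [map_add, hadd, sFun_add q hq, hu, hv]
end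
end

section
/- There exists a unique ℂ-algebra automorphism σ of ℂ[SL₂]_q with σ(t₁₁) = q² t₁₁, σ(t₁₂) = t₁₂, σ(t₂₁) = t₂₁, σ(t₂₂) = q^{−2} t₂₂, and it satisfies r·x = x·σ(r) for every r ∈ ℂ[SL₂]_q, where x = −q t₁₂ t₂₁. (In particular the multiplicative set of powers of x satisfies the two-sided Ore condition: for every r and n there exist r′, r″ with r xⁿ = xⁿ r′ and xⁿ r = r″ xⁿ.) -/
noncomputable section

open QuantumSL2

namespace QuantumSL2

variable (q : ℝ)

lemma rel1 : t11 q * t12 q = (q : ℂ) • (t12 q * t11 q) := by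
  have h := RingQuot.mkAlgHom_rel ℂ (SLRel.r1 (q := q))
  rw [map_mul, map_smul, map_mul] at h
  exact h

lemma rel2 : t11 q * t21 q = (q : ℂ) • (t21 q * t11 q) := by
  have h := RingQuot.mkAlgHom_rel ℂ (SLRel.r2 (q := q))
  rw [map_mul, map_smul, map_mul] at h
  exact h

lemma rel3 : t12 q * t22 q = (q : ℂ) • (t22 q * t12 q) := by
  have h := RingQuot.mkAlgHom_rel ℂ (SLRel.r3 (q := q))
  rw [map_mul, map_smul, map_mul] at h
  exact h

lemma rel4 : t21 q * t22 q = (q : ℂ) • (t22 q * t21 q) := by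
  have h := RingQuot.mkAlgHom_rel ℂ (SLRel.r4 (q := q))
  rw [map_mul, map_smul, map_mul] at h
  exact h

lemma rel5 : t12 q * t21 q = t21 q * t12 q := by
  have h := RingQuot.mkAlgHom_rel ℂ (SLRel.r5 (q := q))
  rw [map_mul, map_mul] at h
  exact h

lemma rel6 : t11 q * t22 q - t22 q * t11 q = ((q : ℂ) - (q : ℂ)⁻¹) • (t12 q * t21 q) := by
  have h := RingQuot.mkAlgHom_rel ℂ (SLRel.r6 (q := q))
  rw [map_sub, map_mul, map_mul, map_smul, map_mul] at h
  exact h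

lemma rel7 : t11 q * t22 q - (q : ℂ) • (t12 q * t21 q) = 1 := by
  have h := RingQuot.mkAlgHom_rel ℂ (SLRel.r7 (q := q))
  rw [map_sub, map_mul, map_smul, map_mul, map_one] at h
  exact h

def gen (u v : ℂ) : Fin 4 → SL2q q
  | 0 => u • t11 q
  | 1 => t12 q
  | 2 => t21 q
  | 3 => v • t22 q

lemma scaleRel (u v : ℂ) (huv : u * v = 1) ⦃x y : F4⦄ (h : SLRel q x y) :
    FreeAlgebra.lift ℂ (gen q u v) x = FreeAlgebra.lift ℂ (gen q u v) y := by
  induction h with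
  | r1 =>
      simp only [map_mul, map_smul, FreeAlgebra.lift_ι_apply, a, b, gen]
      rw [smul_mul_assoc, rel1, mul_smul_comm, smul_smul, smul_smul, mul_comm]
  | r2 =>
      simp only [map_mul, map_smul, FreeAlgebra.lift_ι_apply, a, c, gen]
      rw [smul_mul_assoc, rel2, mul_smul_comm, smul_smul, smul_smul, mul_comm]
  | r3 =>
      simp only [map_mul, map_smul, FreeAlgebra.lift_ι_apply, b, d, gen]
      rw [mul_smul_comm, rel3, smul_mul_assoc, smul_smul, smul_smul, mul_comm]
  | r4 =>
      simp only [map_mul, map_smul, FreeAlgebra.lift_ι_apply, c, d, gen]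
      rw [mul_smul_comm, rel4, smul_mul_assoc, smul_smul, smul_smul, mul_comm]
  | r5 =>
      simp only [map_mul, FreeAlgebra.lift_ι_apply, b, c, gen]
      exact rel5 q
  | r6 =>
      simp only [map_sub, map_mul, map_smul, FreeAlgebra.lift_ι_apply, a, b, c, d, gen,
        smul_mul_assoc, mul_smul_comm, smul_smul]
      rw [mul_comm v u, huv, one_smul, one_smul, rel6]
  | r7 =>
      simp only [map_sub, map_mul, map_smul, map_one, FreeAlgebra.lift_ι_apply, a, b, c, d, gen,
        smul_mul_assoc, mul_smul_comm, smul_smul]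
      rw [mul_comm v u, huv, one_smul]
      exact rel7 q

def scaleHom (u v : ℂ) (huv : u * v = 1) : SL2q q →ₐ[ℂ] SL2q q :=
  RingQuot.liftAlgHom ℂ ⟨FreeAlgebra.lift ℂ (gen q u v), scaleRel q u v huv⟩

lemma scaleHom_t11 (u v : ℂ) (huv : u * v = 1) : scaleHom q u v huv (t11 q) = u • t11 q := by
  simp [scaleHom, t11, RingQuot.liftAlgHom_mkAlgHom_apply, a, gen]
lemma scaleHom_t12 (u v : ℂ) (huv : u * v = 1) : scaleHom q u v huv (t12 q) = t12 q := by
  simp [scaleHom, t12, RingQuot.liftAlgHom_mkAlgHom_apply, b, gen]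
lemma scaleHom_t21 (u v : ℂ) (huv : u * v = 1) : scaleHom q u v huv (t21 q) = t21 q := by
  simp [scaleHom, t21, RingQuot.liftAlgHom_mkAlgHom_apply, c, gen]
lemma scaleHom_t22 (u v : ℂ) (huv : u * v = 1) : scaleHom q u v huv (t22 q) = v • t22 q := by
  simp [scaleHom, t22, RingQuot.liftAlgHom_mkAlgHom_apply, d, gen]

lemma hom_ext' (f g : SL2q q →ₐ[ℂ] SL2q q)
    (h11 : f (t11 q) = g (t11 q)) (h12 : f (t12 q) = g (t12 q))
    (h21 : f (t21 q) = g (t21 q)) (h22 : f (t22 q) = g (t22 q)) : f = g := by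
  apply RingQuot.ringQuot_ext'
  apply FreeAlgebra.hom_ext
  funext i
  fin_cases i
  · exact h11
  · exact h12
  · exact h21
  · exact h22

lemma comm11 : t11 q * (t12 q * t21 q) = ((q : ℂ) ^ 2) • ((t12 q * t21 q) * t11 q) := by
  rw [← mul_assoc, rel1, smul_mul_assoc, mul_assoc, rel2, mul_smul_comm, smul_smul,
    ← mul_assoc, sq]

lemma comm12 : t12 q * (t12 q * t21 q) = (t12 q * t21 q) * t12 q := by
  rw [rel5, ← mul_assoc, ← rel5, mul_assoc]

lemma comm21 : t21 q * (t12 q * t21 q) = (t12 q * t21 q) * t21 q := by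
  rw [← mul_assoc, ← rel5, mul_assoc]

lemma comm22 (hq : (q : ℂ) ≠ 0) :
    t22 q * (t12 q * t21 q) = (((q : ℂ) ^ 2)⁻¹) • ((t12 q * t21 q) * t22 q) := by
  have h3 : t22 q * t12 q = (q : ℂ)⁻¹ • (t12 q * t22 q) := by
    rw [rel3, smul_smul, inv_mul_cancel₀ hq, one_smul]
  have h4 : t22 q * t21 q = (q : ℂ)⁻¹ • (t21 q * t22 q) := by
    rw [rel4, smul_smul, inv_mul_cancel₀ hq, one_smul]
  rw [← mul_assoc, h3, smul_mul_assoc, mul_assoc, h4, mul_smul_comm, smul_smul,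
    ← mul_assoc, ← mul_inv, ← sq]

end QuantumSL2

/-- There is a unique algebra automorphism `σ` of `ℂ[SL₂]_q` with
`σ(t₁₁) = q² t₁₁`, `σ(t₁₂) = t₁₂`, `σ(t₂₁) = t₂₁`, `σ(t₂₂) = q⁻² t₂₂`; it satisfies
`r x = x σ(r)` for all `r`, where `x = −q t₁₂ t₂₁`; in particular the powers of `x`
satisfy the two-sided Ore condition. -/
theorem sl2q_sigma_ore (q : ℝ) (hq0 : 0 < q) (hq1 : q < 1) :
    (∃! σ : SL2q q ≃ₐ[ℂ] SL2q q,
      σ (t11 q) = ((q : ℂ) ^ 2) • t11 q ∧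
      σ (t12 q) = t12 q ∧
      σ (t21 q) = t21 q ∧
      σ (t22 q) = (((q : ℂ) ^ 2)⁻¹) • t22 q) ∧
    (∀ σ : SL2q q ≃ₐ[ℂ] SL2q q,
      σ (t11 q) = ((q : ℂ) ^ 2) • t11 q →
      σ (t12 q) = t12 q →
      σ (t21 q) = t21 q →
      σ (t22 q) = (((q : ℂ) ^ 2)⁻¹) • t22 q →
      ∀ r : SL2q q, r * ((-(q : ℂ)) • (t12 q * t21 q)) =
        ((-(q : ℂ)) • (t12 q * t21 q)) * σ r) ∧
    (∀ (r : SL2q q) (n : ℕ), ∃ r' r'' : SL2q q,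
      r * ((-(q : ℂ)) • (t12 q * t21 q)) ^ n =
        ((-(q : ℂ)) • (t12 q * t21 q)) ^ n * r' ∧
      ((-(q : ℂ)) • (t12 q * t21 q)) ^ n * r =
        r'' * ((-(q : ℂ)) • (t12 q * t21 q)) ^ n) := by
  have hq : (q : ℂ) ≠ 0 := by exact_mod_cast hq0.ne'
  have hu : ((q : ℂ) ^ 2) * (((q : ℂ) ^ 2)⁻¹) = 1 := mul_inv_cancel₀ (pow_ne_zero 2 hq)
  have hv : (((q : ℂ) ^ 2)⁻¹) * ((q : ℂ) ^ 2) = 1 := inv_mul_cancel₀ (pow_ne_zero 2 hq)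
  let σ0 : SL2q q ≃ₐ[ℂ] SL2q q :=
    AlgEquiv.ofAlgHom (scaleHom q _ _ hu) (scaleHom q _ _ hv)
    (hom_ext' q _ _
      (by simp [scaleHom_t11, scaleHom_t12, scaleHom_t21, scaleHom_t22, smul_smul, hu, hv])
      (by simp [scaleHom_t12])
      (by simp [scaleHom_t21])
      (by simp [scaleHom_t11, scaleHom_t12, scaleHom_t21, scaleHom_t22, smul_smul, hu, hv]))
    (hom_ext' q _ _
      (by simp [scaleHom_t11, scaleHom_t12, scaleHom_t21, scaleHom_t22, smul_smul, hu, hv])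
      (by simp [scaleHom_t12])
      (by simp [scaleHom_t21])
      (by simp [scaleHom_t11, scaleHom_t12, scaleHom_t21, scaleHom_t22, smul_smul, hu, hv]))
  have hσ0 : σ0 (t11 q) = ((q : ℂ) ^ 2) • t11 q ∧ σ0 (t12 q) = t12 q ∧ σ0 (t21 q) = t21 q ∧
      σ0 (t22 q) = (((q : ℂ) ^ 2)⁻¹) • t22 q := by
    refine ⟨?_, ?_, ?_, ?_⟩ <;>
      simp [σ0, scaleHom_t11, scaleHom_t12, scaleHom_t21, scaleHom_t22]
  have key : ∀ σ : SL2q q ≃ₐ[ℂ] SL2q q,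
      σ (t11 q) = ((q : ℂ) ^ 2) • t11 q → σ (t12 q) = t12 q → σ (t21 q) = t21 q →
      σ (t22 q) = (((q : ℂ) ^ 2)⁻¹) • t22 q →
      ∀ r : SL2q q, r * ((-(q : ℂ)) • (t12 q * t21 q)) =
        ((-(q : ℂ)) • (t12 q * t21 q)) * σ r := by
    intro σ h11 h12 h21 h22 r
    obtain ⟨p, rfl⟩ := RingQuot.mkAlgHom_surjective ℂ (SLRel q) r
    induction p using FreeAlgebra.induction with
    | grade0 s =>
        rw [AlgHom.commutes, AlgEquiv.commutes]
        exact Algebra.commutes s _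
    | grade1 i =>
        fin_cases i
        · show t11 q * _ = _ * σ (t11 q)
          simp only [h11, mul_smul_comm, smul_mul_assoc, comm11, smul_smul]
          congr 1
          ring
        · show t12 q * _ = _ * σ (t12 q)
          rw [h12, mul_smul_comm, smul_mul_assoc, comm12]
        · show t21 q * _ = _ * σ (t21 q)
          rw [h21, mul_smul_comm, smul_mul_assoc, comm21]
        · show t22 q * _ = _ * σ (t22 q)
          simp only [h22, mul_smul_comm, smul_mul_assoc, comm22 q hq, smul_smul]
          congr 1
          ring
    | mul p1 p2 ih1 ih2 =>
        rw [map_mul, map_mul, mul_assoc, ih2, ← mul_assoc, ih1, mul_assoc]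
    | add p1 p2 ih1 ih2 =>
        rw [map_add, map_add, add_mul, mul_add, ih1, ih2]
  refine ⟨⟨σ0, ⟨hσ0.1, hσ0.2.1, hσ0.2.2.1, hσ0.2.2.2⟩, ?_⟩, key, ?_⟩
  · rintro τ ⟨k11, k12, k21, k22⟩
    apply AlgEquiv.coe_algHom_injective
    exact hom_ext' q _ _
      (by show τ (t11 q) = σ0 (t11 q); rw [k11, hσ0.1])
      (by show τ (t12 q) = σ0 (t12 q); rw [k12, hσ0.2.1])
      (by show τ (t21 q) = σ0 (t21 q); rw [k21, hσ0.2.2.1])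
      (by show τ (t22 q) = σ0 (t22 q); rw [k22, hσ0.2.2.2])
  · intro r n
    induction n generalizing r with
    | zero => exact ⟨r, r, by simp⟩
    | succ n ih =>
        obtain ⟨r', -, hr', -⟩ := ih (σ0 r)
        obtain ⟨-, r'', -, hr''⟩ := ih (σ0.symm r)
        refine ⟨r', r'', ?_, ?_⟩
        · rw [pow_succ', ← mul_assoc, key σ0 hσ0.1 hσ0.2.1 hσ0.2.2.1 hσ0.2.2.2 r,
            mul_assoc, hr', ← mul_assoc]
        · have hx : ((-(q : ℂ)) • (t12 q * t21 q)) * r =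
              σ0.symm r * ((-(q : ℂ)) • (t12 q * t21 q)) := by
            rw [key σ0 hσ0.1 hσ0.2.1 hσ0.2.2.1 hσ0.2.2.2 (σ0.symm r), AlgEquiv.apply_symm_apply]
          rw [pow_succ, mul_assoc, hx, ← mul_assoc, hr'', mul_assoc]
end
end

section
/- Let R be a unital ℂ-algebra and φ : ℂ[SL₂]_q → R a unital algebra homomorphism such that φ(t₁₂ t₂₁) is invertible in R. Then φ(t₁₂) and φ(t₂₁) are invertible in R, and the elements Z = φ(t₁₂)^{−1} φ(t₁₁) and W = φ(t₂₂) φ(t₂₁)^{−1} satisfy the identity Z W − q^{−2} W Z = (q − q^{−1})·1. (This is the key identity showing that z ↦ t₁₂^{−1} t₁₁ defines an embedding of the quantum disc algebra into the localization ℂ[w₀SU₁,₁]_{q,x}.) -/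
noncomputable section

open QuantumSL2

/-- If `φ : ℂ[SL₂]_q → R` is a unital algebra homomorphism with `φ(t₁₂ t₂₁)`
invertible, then `φ(t₁₂)` and `φ(t₂₁)` are invertible and
`Z = φ(t₁₂)⁻¹ φ(t₁₁)`, `W = φ(t₂₂) φ(t₂₁)⁻¹` satisfy
`Z W − q⁻² W Z = (q − q⁻¹)·1`. -/
theorem sl2q_localized_disc_relation (q : ℝ) (hq0 : 0 < q) (hq1 : q < 1)
    {R : Type*} [Ring R] [Algebra ℂ R]
    (φ : SL2q q →ₐ[ℂ] R) (hx : IsUnit (φ (t12 q * t21 q))) :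
    IsUnit (φ (t12 q)) ∧ IsUnit (φ (t21 q)) ∧
    (Ring.inverse (φ (t12 q)) * φ (t11 q)) * (φ (t22 q) * Ring.inverse (φ (t21 q))) -
      (((q : ℂ) ^ 2)⁻¹) •
        ((φ (t22 q) * Ring.inverse (φ (t21 q))) * (Ring.inverse (φ (t12 q)) * φ (t11 q))) =
      ((q : ℂ) - (q : ℂ)⁻¹) • (1 : R) := by

  have hqC : (q : ℂ) ≠ 0 := by
    exact_mod_cast hq0.ne'
  have hrel : ∀ {x y : F4}, SLRel q x y →
      φ (RingQuot.mkAlgHom ℂ (SLRel q) x) = φ (RingQuot.mkAlgHom ℂ (SLRel q) y) :=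
    fun h => congrArg φ (RingQuot.mkAlgHom_rel ℂ h)
  have hsm : ∀ (s : ℂ) (x : F4), φ (RingQuot.mkAlgHom ℂ (SLRel q) (s • x)) =
      s • φ (RingQuot.mkAlgHom ℂ (SLRel q) x) := fun s x => by
    rw [map_smul, map_smul]
  simp only [t11, t12, t21, t22]
  set A := φ (RingQuot.mkAlgHom ℂ (SLRel q) a) with hA
  set B := φ (RingQuot.mkAlgHom ℂ (SLRel q) b) with hB0
  set C := φ (RingQuot.mkAlgHom ℂ (SLRel q) c) with hC0
  set D := φ (RingQuot.mkAlgHom ℂ (SLRel q) d) with hD0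
  have hbd : B * D = (q : ℂ) • (D * B) := by
    have := hrel (SLRel.r3 (q := q)); rw [hsm] at this
    simpa [map_mul] using this
  have hcd : C * D = (q : ℂ) • (D * C) := by
    have := hrel (SLRel.r4 (q := q)); rw [hsm] at this
    simpa [map_mul] using this
  have hbc : B * C = C * B := by
    have := hrel (SLRel.r5 (q := q)); simpa [map_mul] using this
  have hr6 : A * D - D * A = ((q : ℂ) - (q : ℂ)⁻¹) • (B * C) := by
    have := hrel (SLRel.r6 (q := q)); rw [hsm] at this
    simpa [map_mul, map_sub] using this
  have hr7 : A * D - (q : ℂ) • (B * C) = 1 := by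
    have := hrel (SLRel.r7 (q := q))
    simp only [map_sub, hsm, map_mul, map_one] at this
    exact this
  have hAD : A * D = 1 + (q : ℂ) • (B * C) := by
    rw [sub_eq_iff_eq_add] at hr7; rw [hr7]
  have hDA : D * A = 1 + (q : ℂ)⁻¹ • (B * C) := by
    have h : D * A = A * D - ((q : ℂ) - (q : ℂ)⁻¹) • (B * C) := by
      rw [← hr6]; abel
    rw [h, hAD]
    module
  have hxBC : IsUnit (B * C) := by
    have : φ (t12 q * t21 q) = B * C := by rw [map_mul]; rfl
    rwa [this] at hx
  obtain ⟨u, hu⟩ := hxBC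
  have hBC' : Commute B C := hbc
  have hBu : Commute B (u : R) := by rw [hu]; exact (Commute.refl B).mul_right hBC'
  have hCu : Commute C (u : R) := by rw [hu]; exact hBC'.symm.mul_right (Commute.refl C)
  have hBui : Commute B ((u⁻¹ : Rˣ) : R) := hBu.units_inv_right
  have hCui : Commute C ((u⁻¹ : Rˣ) : R) := hCu.units_inv_right
  have hB1 : B * (C * ((u⁻¹ : Rˣ) : R)) = 1 := by
    rw [← mul_assoc B C _, ← hu]; exact u.mul_inv
  have hB2 : (C * ((u⁻¹ : Rˣ) : R)) * B = 1 := by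
    rw [mul_assoc C _ B, ← hBui.eq, ← mul_assoc C B _, ← hbc, ← hu]; exact u.mul_inv
  have hBunit : IsUnit B := ⟨⟨B, C * ((u⁻¹ : Rˣ) : R), hB1, hB2⟩, rfl⟩
  have hC1 : C * (B * ((u⁻¹ : Rˣ) : R)) = 1 := by
    rw [← mul_assoc C B _, ← hbc, ← hu]; exact u.mul_inv
  have hC2 : (B * ((u⁻¹ : Rˣ) : R)) * C = 1 := by
    rw [mul_assoc B _ C, ← hCui.eq, ← mul_assoc B C _, ← hu]; exact u.mul_inv
  have hCunit : IsUnit C := ⟨⟨C, B * ((u⁻¹ : Rˣ) : R), hC1, hC2⟩, rfl⟩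
  refine ⟨hBunit, hCunit, ?_⟩
  set Bi := Ring.inverse B with hBi
  set Ci := Ring.inverse C with hCi
  have hBBi : B * Bi = 1 := Ring.mul_inverse_cancel B hBunit
  have hBiB : Bi * B = 1 := Ring.inverse_mul_cancel B hBunit
  have hCCi : C * Ci = 1 := Ring.mul_inverse_cancel C hCunit
  have hCiC : Ci * C = 1 := Ring.inverse_mul_cancel C hCunit
  have cBBi : ∀ x : R, B * (Bi * x) = x := fun x => by rw [← mul_assoc, hBBi, one_mul]
  have cBiB : ∀ x : R, Bi * (B * x) = x := fun x => by rw [← mul_assoc, hBiB, one_mul]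
  have cCCi : ∀ x : R, C * (Ci * x) = x := fun x => by rw [← mul_assoc, hCCi, one_mul]
  have cCiC : ∀ x : R, Ci * (C * x) = x := fun x => by rw [← mul_assoc, hCiC, one_mul]
  have hDBi : D * Bi = (q : ℂ) • (Bi * D) := by
    have h := congrArg (fun x => Bi * x * Bi) hbd
    simpa [mul_assoc, cBiB, hBBi, hBiB, mul_smul_comm, smul_mul_assoc, mul_one] using h
  have hDCi : D * Ci = (q : ℂ) • (Ci * D) := by
    have h := congrArg (fun x => Ci * x * Ci) hcd
    simpa [mul_assoc, cCiC, hCCi, hCiC, mul_smul_comm, smul_mul_assoc, mul_one] using h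
  have hBiCi : Bi * Ci = Ci * Bi := by
    have h1 : (Bi * Ci) * (B * C) = 1 := by
      rw [hbc, ← mul_assoc, mul_assoc Bi Ci C, hCiC, mul_one, hBiB]
    have h2 : (Ci * Bi) * (B * C) = 1 := by
      rw [← mul_assoc, mul_assoc Ci Bi B, hBiB, mul_one, hCiC]
    have e1 : Bi * Ci = ((u⁻¹ : Rˣ) : R) := by
      calc Bi * Ci = (Bi * Ci) * ((B * C) * ((u⁻¹ : Rˣ) : R)) := by
            rw [← hu, u.mul_inv, mul_one]
        _ = ((Bi * Ci) * (B * C)) * ((u⁻¹ : Rˣ) : R) := by simp only [mul_assoc]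
        _ = ((u⁻¹ : Rˣ) : R) := by rw [h1, one_mul]
    have e2 : Ci * Bi = ((u⁻¹ : Rˣ) : R) := by
      calc Ci * Bi = (Ci * Bi) * ((B * C) * ((u⁻¹ : Rˣ) : R)) := by
            rw [← hu, u.mul_inv, mul_one]
        _ = ((Ci * Bi) * (B * C)) * ((u⁻¹ : Rˣ) : R) := by simp only [mul_assoc]
        _ = ((u⁻¹ : Rˣ) : R) := by rw [h2, one_mul]
    rw [e1, e2]
  have hZW : (Bi * A) * (D * Ci) = Bi * Ci + (q : ℂ) • 1 := by
    have step : (Bi * A) * (D * Ci) = Bi * ((A * D) * Ci) := by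
      rw [mul_assoc, ← mul_assoc A D Ci]
    rw [step, hAD]
    simp only [add_mul, one_mul, smul_mul_assoc, mul_add, mul_smul_comm]
    congr 1
    rw [mul_assoc B C Ci, hCCi, mul_one, hBiB]
  have hWZ : (D * Ci) * (Bi * A) = ((q : ℂ) ^ 2) • (Ci * Bi) + (q : ℂ) • 1 := by
    rw [hDCi, smul_mul_assoc]
    have s1 : (Ci * D) * (Bi * A) = Ci * ((D * Bi) * A) := by
      rw [mul_assoc, ← mul_assoc D Bi A]
    rw [s1, hDBi, smul_mul_assoc, mul_smul_comm, smul_smul]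
    have s2 : Ci * ((Bi * D) * A) = Ci * (Bi * (D * A)) := by rw [mul_assoc Bi D A]
    rw [s2, hDA]
    simp only [mul_add, mul_one, mul_smul_comm]
    have s3 : Ci * (Bi * (B * C)) = 1 := by rw [cBiB, hCiC]
    rw [s3, smul_add, smul_smul]
    have e : (q : ℂ) * (q : ℂ) * (q : ℂ)⁻¹ = (q : ℂ) := by field_simp
    rw [e, pow_two]
  rw [hZW, hWZ, hBiCi]
  rw [smul_add, smul_smul, smul_smul, inv_mul_cancel₀ (pow_ne_zero 2 hqC), one_smul]
  have hq3 : ((q : ℂ) ^ 2)⁻¹ * (q : ℂ) = (q : ℂ)⁻¹ := by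
    field_simp
  rw [hq3, sub_smul]
  abel
end
end

section
/- The linear endomorphisms π₊(t₁₁), π₊(t₁₂), π₊(t₂₁), π₊(t₂₂) of V satisfy all seven defining relations of ℂ[SL₂]_q, namely: π₊(t₁₁)π₊(t₁₂) = q π₊(t₁₂)π₊(t₁₁), π₊(t₁₁)π₊(t₂₁) = q π₊(t₂₁)π₊(t₁₁), π₊(t₁₂)π₊(t₂₂) = q π₊(t₂₂)π₊(t₁₂), π₊(t₂₁)π₊(t₂₂) = q π₊(t₂₂)π₊(t₂₁), π₊(t₁₂)π₊(t₂₁) = π₊(t₂₁)π₊(t₁₂), π₊(t₁₁)π₊(t₂₂) − π₊(t₂₂)π₊(t₁₁) = (q − q^{−1}) π₊(t₁₂)π₊(t₂₁), and π₊(t₁₁)π₊(t₂₂) − q π₊(t₁₂)π₊(t₂₁) = id_V. Consequently they induce a unital algebra homomorphism π₊ : ℂ[SL₂]_q → End(V). -/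
noncomputable section

open QuantumSL2

/-- The standard basis vectors of the space `V = ℕ →₀ ℂ` of finitely supported
functions. -/
def eV (j : ℕ) : ℕ →₀ ℂ := Finsupp.single j 1


/-- Two endomorphisms of `ℕ →₀ ℂ` agreeing on all basis vectors are equal. -/
lemma end_ext_eV {f g : Module.End ℂ (ℕ →₀ ℂ)} (h : ∀ j, f (eV j) = g (eV j)) : f = g := by
  apply Finsupp.lhom_ext
  intro j x
  have hx : (Finsupp.single j x : ℕ →₀ ℂ) = x • eV j := by
    simp [eV, Finsupp.smul_single]
  rw [hx, map_smul, map_smul, h]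

/-- The operators of the representation `π₊` satisfy the seven defining relations of
`ℂ[SL₂]_q`, hence induce a unital algebra homomorphism `π₊ : ℂ[SL₂]_q → End(V)`. -/
theorem sl2q_piPlus_representation (q : ℝ) (hq0 : 0 < q) (hq1 : q < 1)
    (A B C D : Module.End ℂ (ℕ →₀ ℂ))
    (hA : ∀ j : ℕ, A (eV j) = (Real.sqrt ((q ^ (2 * (j + 1)))⁻¹ - 1) : ℂ) • eV (j + 1))
    (hB : ∀ j : ℕ, B (eV j) = (((q : ℂ) ^ j)⁻¹) • eV j)
    (hC : ∀ j : ℕ, C (eV j) = (-((q : ℂ) ^ (j + 1))⁻¹) • eV j)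
    (hD0 : D (eV 0) = 0)
    (hD : ∀ j : ℕ, D (eV (j + 1)) = (-(Real.sqrt ((q ^ (2 * (j + 1)))⁻¹ - 1) : ℂ)) • eV j) :
    A * B = (q : ℂ) • (B * A) ∧
    A * C = (q : ℂ) • (C * A) ∧
    B * D = (q : ℂ) • (D * B) ∧
    C * D = (q : ℂ) • (D * C) ∧
    B * C = C * B ∧
    A * D - D * A = ((q : ℂ) - (q : ℂ)⁻¹) • (B * C) ∧
    A * D - (q : ℂ) • (B * C) = 1 ∧
    ∃ π : SL2q q →ₐ[ℂ] Module.End ℂ (ℕ →₀ ℂ),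
      π (t11 q) = A ∧ π (t12 q) = B ∧ π (t21 q) = C ∧ π (t22 q) = D := by
  have hq : (q : ℂ) ≠ 0 := by exact_mod_cast hq0.ne'
  have hs : ∀ j : ℕ, ((Real.sqrt ((q ^ (2 * (j + 1)))⁻¹ - 1) : ℝ) : ℂ) *
      ((Real.sqrt ((q ^ (2 * (j + 1)))⁻¹ - 1) : ℝ) : ℂ) = ((q : ℂ) ^ (2 * (j + 1)))⁻¹ - 1 := by
    intro j
    have h2 : (0 : ℝ) < q ^ (2 * (j + 1)) := pow_pos hq0 _
    have h1 : q ^ (2 * (j + 1)) ≤ 1 := pow_le_one₀ hq0.le hq1.le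
    have hnn : (0 : ℝ) ≤ (q ^ (2 * (j + 1)))⁻¹ - 1 :=
      sub_nonneg.mpr ((one_le_inv₀ h2).mpr h1)
    have h3 := Real.mul_self_sqrt hnn
    rw [← Complex.ofReal_mul, h3]
    push_cast
    ring
  have h1 : A * B = (q : ℂ) • (B * A) := by
    apply end_ext_eV
    intro j
    simp only [Module.End.mul_apply, LinearMap.smul_apply, hA, hB, map_smul, smul_smul]
    congr 1
    field_simp
    ring
  have h2 : A * C = (q : ℂ) • (C * A) := by
    apply end_ext_eV
    intro j
    simp only [Module.End.mul_apply, LinearMap.smul_apply, hA, hC, map_smul, smul_smul]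
    congr 1
    field_simp
    ring
  have h3 : B * D = (q : ℂ) • (D * B) := by
    apply end_ext_eV
    intro j
    cases j with
    | zero => simp [Module.End.mul_apply, LinearMap.smul_apply, hB, hD0, map_smul]
    | succ j =>
      simp only [Module.End.mul_apply, LinearMap.smul_apply, hB, hD, map_smul, smul_smul]
      congr 1
      field_simp
      ring
  have h4 : C * D = (q : ℂ) • (D * C) := by
    apply end_ext_eV
    intro j
    cases j with
    | zero => simp [Module.End.mul_apply, LinearMap.smul_apply, hC, hD0, map_smul]
    | succ j =>
      simp only [Module.End.mul_apply, LinearMap.smul_apply, hC, hD, map_smul, smul_smul]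
      congr 1
      field_simp
      ring
  have h5 : B * C = C * B := by
    apply end_ext_eV
    intro j
    simp only [Module.End.mul_apply, hB, hC, map_smul, smul_smul]
    congr 1
    ring
  have h6 : A * D - D * A = ((q : ℂ) - (q : ℂ)⁻¹) • (B * C) := by
    apply end_ext_eV
    intro j
    cases j with
    | zero =>
      simp only [LinearMap.sub_apply, Module.End.mul_apply, LinearMap.smul_apply, hA, hB, hC,
        hD0, hD, map_smul, map_zero, smul_zero]
      match_scalars
      simp only [mul_one, mul_neg, neg_mul, neg_neg]
      rw [hs 0]
      field_simp
      ring
    | succ j =>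
      simp only [LinearMap.sub_apply, Module.End.mul_apply, LinearMap.smul_apply, hA, hB, hC,
        hD, map_smul]
      match_scalars
      simp only [mul_one, mul_neg, neg_mul, neg_neg]
      rw [hs j, hs (j + 1)]
      field_simp
      ring
  have h7 : A * D - (q : ℂ) • (B * C) = 1 := by
    apply end_ext_eV
    intro j
    cases j with
    | zero =>
      simp only [LinearMap.sub_apply, Module.End.mul_apply, LinearMap.smul_apply, hB, hC,
        hD0, map_smul, map_zero, smul_zero, Module.End.one_apply]
      match_scalars
      simp only [mul_one, mul_neg, neg_mul, neg_neg, pow_zero, inv_one, pow_one]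
      field_simp
      ring
    | succ j =>
      simp only [LinearMap.sub_apply, Module.End.mul_apply, LinearMap.smul_apply, hA, hB, hC,
        hD, map_smul, Module.End.one_apply]
      match_scalars
      simp only [mul_one, mul_neg, neg_mul, neg_neg]
      rw [hs j]
      field_simp
      ring
  refine ⟨h1, h2, h3, h4, h5, h6, h7, ?_⟩
  have hrel : ∀ ⦃x y : F4⦄, SLRel q x y →
      (FreeAlgebra.lift ℂ (![A, B, C, D] : Fin 4 → Module.End ℂ (ℕ →₀ ℂ))) x =
      (FreeAlgebra.lift ℂ (![A, B, C, D] : Fin 4 → Module.End ℂ (ℕ →₀ ℂ))) y := by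
    intro x y h
    cases h <;>
      simp only [QuantumSL2.a, QuantumSL2.b, QuantumSL2.c, QuantumSL2.d, map_mul, map_sub,
        map_smul, map_one, FreeAlgebra.lift_ι_apply, Matrix.cons_val_zero, Matrix.cons_val_one,
        Matrix.head_cons, Matrix.cons_val_two, Matrix.tail_cons, Matrix.cons_val_three,
        Matrix.head_fin_const] <;>
      assumption
  refine ⟨RingQuot.liftAlgHom ℂ ⟨FreeAlgebra.lift ℂ ![A, B, C, D], hrel⟩, ?_, ?_, ?_, ?_⟩ <;>
    simp [t11, t12, t21, t22, QuantumSL2.a, QuantumSL2.b, QuantumSL2.c, QuantumSL2.d,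
      RingQuot.liftAlgHom_mkAlgHom_apply]
end
end

section
/- With respect to the standard inner product ⟨e_i, e_j⟩ = δ_{ij} on V, the operators π₊(t_{ij}) satisfy the formal adjoint relations of a *-representation of ℂ[w₀SU₁,₁]_q: for all u, v ∈ V one has ⟨π₊(t₁₁)u, v⟩ = ⟨u, −π₊(t₂₂)v⟩ and ⟨π₊(t₁₂)u, v⟩ = ⟨u, −q π₊(t₂₁)v⟩. (These correspond to the involution t₁₁* = −t₂₂, t₁₂* = −q t₂₁.) -/
noncomputable section

def innV (u v : ℕ →₀ ℂ) : ℂ := u.sum fun j a => a * (starRingEnd ℂ) (v j)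

lemma innV_single_left (j : ℕ) (a : ℂ) (v : ℕ →₀ ℂ) :
    innV (Finsupp.single j a) v = a * (starRingEnd ℂ) (v j) :=
  Finsupp.sum_single_index (by simp)

lemma innV_add_left (u u' v : ℕ →₀ ℂ) : innV (u + u') v = innV u v + innV u' v :=
  Finsupp.sum_add_index (by simp) (by intros; ring)

lemma innV_zero_left (v : ℕ →₀ ℂ) : innV 0 v = 0 := by simp [innV]

lemma innV_zero_right (u : ℕ →₀ ℂ) : innV u 0 = 0 := by simp [innV]

lemma innV_smul_left (c : ℂ) (u v : ℕ →₀ ℂ) : innV (c • u) v = c * innV u v := by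
  unfold innV
  rw [Finsupp.sum_smul_index (fun i => by simp), Finsupp.mul_sum]
  apply Finsupp.sum_congr
  intros; ring

lemma innV_smul_right (c : ℂ) (u v : ℕ →₀ ℂ) :
    innV u (c • v) = (starRingEnd ℂ) c * innV u v := by
  unfold innV
  rw [Finsupp.mul_sum]
  apply Finsupp.sum_congr
  intro j _
  simp [map_mul]
  ring

lemma innV_eV (j k : ℕ) : innV (eV j) (eV k) = if j = k then 1 else 0 := by
  rw [eV, eV, innV_single_left, Finsupp.single_apply]
  rcases eq_or_ne j k with h | h
  · subst h; simp
  · simp [h, h.symm]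

lemma innV_ext (T S : Module.End ℂ (ℕ →₀ ℂ))
    (h : ∀ j k, innV (T (eV j)) (eV k) = innV (eV j) (S (eV k))) :
    ∀ u v, innV (T u) v = innV u (S v) := by
  intro u v
  induction u using Finsupp.induction_linear with
  | zero => simp [innV_zero_left]
  | add f g hf hg => rw [map_add, innV_add_left, hf, hg, ← innV_add_left]
  | single j a =>
    induction v using Finsupp.induction_linear with
    | zero => simp [innV_zero_right]
    | add f g hf hg =>
      rw [map_add]
      calc innV (T (Finsupp.single j a)) (f + g)
          = innV (T (Finsupp.single j a)) f + innV (T (Finsupp.single j a)) g := by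
            unfold innV; rw [← Finsupp.sum_add]; apply Finsupp.sum_congr; intros; simp only [Finsupp.add_apply, map_add]; ring
        _ = innV (Finsupp.single j a) (S f) + innV (Finsupp.single j a) (S g) := by rw [hf, hg]
        _ = innV (Finsupp.single j a) (S f + S g) := by
            unfold innV; rw [← Finsupp.sum_add]; apply Finsupp.sum_congr; intros; simp only [Finsupp.add_apply, map_add]; ring
    | single k b =>
      have e1 : (Finsupp.single j a : ℕ →₀ ℂ) = a • eV j := by simp [eV, Finsupp.smul_single]
      have e2 : (Finsupp.single k b : ℕ →₀ ℂ) = b • eV k := by simp [eV, Finsupp.smul_single]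
      rw [e1, e2, map_smul, map_smul, innV_smul_left, innV_smul_left,
        innV_smul_right, innV_smul_right, h]

/-- The operators `π₊(t₁₁)`, `π₊(t₂₂)` and `π₊(t₁₂)`, `π₊(t₂₁)` are formal adjoints
of one another up to the signs and factors prescribed by the involution
`t₁₁* = −t₂₂`, `t₁₂* = −q t₂₁` of `ℂ[w₀SU₁,₁]_q`. -/
theorem piPlus_star_representation (q : ℝ) (hq0 : 0 < q) (hq1 : q < 1)
    (A B C D : Module.End ℂ (ℕ →₀ ℂ))
    (hA : ∀ j : ℕ, A (eV j) = (Real.sqrt ((q ^ (2 * (j + 1)))⁻¹ - 1) : ℂ) • eV (j + 1))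
    (hB : ∀ j : ℕ, B (eV j) = (((q : ℂ) ^ j)⁻¹) • eV j)
    (hC : ∀ j : ℕ, C (eV j) = (-((q : ℂ) ^ (j + 1))⁻¹) • eV j)
    (hD0 : D (eV 0) = 0)
    (hD : ∀ j : ℕ, D (eV (j + 1)) = (-(Real.sqrt ((q ^ (2 * (j + 1)))⁻¹ - 1) : ℂ)) • eV j) :
    (∀ u v : ℕ →₀ ℂ, innV (A u) v = innV u (-(D v))) ∧
    (∀ u v : ℕ →₀ ℂ, innV (B u) v = innV u ((-(q : ℂ)) • C v)) := by
  have hqC : (q : ℂ) ≠ 0 := by exact_mod_cast hq0.ne'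
  constructor
  · have := innV_ext A (-D) ?_
    · intro u v; simpa using this u v
    · intro j k
      rw [hA, innV_smul_left]
      match k with
      | 0 =>
        simp [LinearMap.neg_apply, hD0, innV_zero_right, innV_eV]
      | Nat.succ m =>
        rw [LinearMap.neg_apply, hD m, neg_smul, neg_neg, innV_smul_right, innV_eV, innV_eV]
        rw [Complex.conj_ofReal]
        by_cases h : j = m <;> simp [h]
  · have := innV_ext B ((-(q:ℂ)) • C) ?_
    · intro u v; simpa using this u v
    · intro j k
      rw [LinearMap.smul_apply, hB, hC, innV_smul_left, smul_smul, innV_smul_right, innV_eV]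
      by_cases h : j = k
      · subst h
        simp only [if_pos, mul_one, map_mul, map_neg, map_inv₀, map_pow, Complex.conj_ofReal,
          neg_mul_neg]
        rw [pow_succ, mul_inv, mul_comm (((q:ℂ)^j)⁻¹) ((q:ℂ))⁻¹,
          ← mul_assoc, mul_inv_cancel₀ hqC, one_mul]
      · simp [h]
end
end
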